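/- arXiv:1008.3716 — 3 statements merged into one kernel-verified Lean document; each statement's English description precedes it below -/
import Mathlib

section
/- Let y_F be the linear chain with nearest-neighbor spacing Fε. Then for every constrained displacement u ∈ 𝒰̃, δ²E^a(y_F)[u,u] = (φ''(F) + 4 φ''(2F)) ‖u'‖²_{ℓ²_ε} − ε² φ''(2F) ‖u''‖²_{ℓ²_ε}. Consequently, if φ''(2F) ≤ 0, then inf over u ∈ 𝒰̃ \ {0} of δ²E^a(y_F)[u,u]/‖u'‖²_{ℓ²_ε} equals φ''(F) + 4 φ''(2F) − ε² φ''(2F) (2 sin(πε)/ε)², where (2 sin(πε)/ε)² = inf over u ∈ 𝒰̃ \ {0} of ‖u''‖²_{ℓ²_ε}/‖u'‖²_{ℓ²_ε}. -/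
noncomputable section

open Real Finset

/-- Euclidean norm on `ℝ × ℝ`. -/
def enorm2 (v : ℝ × ℝ) : ℝ := Real.sqrt (v.1 ^ 2 + v.2 ^ 2)

/-- Euclidean dot product on `ℝ × ℝ`. -/
def edot (v w : ℝ × ℝ) : ℝ := v.1 * w.1 + v.2 * w.2

/-- `N`-periodic mean-zero displacements (the space `𝒰`). -/
def IsDisp (N : ℕ) (u : ℤ → ℝ × ℝ) : Prop :=
  (∀ ℓ : ℤ, u (ℓ + (N : ℤ)) = u ℓ) ∧ ∑ ℓ ∈ Finset.Icc (1 : ℤ) (N : ℤ), u ℓ = 0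

/-- Constrained displacements (the space `𝒰̃`): second component vanishes. -/
def IsDisp1D (N : ℕ) (u : ℤ → ℝ × ℝ) : Prop :=
  IsDisp N u ∧ ∀ ℓ : ℤ, (u ℓ).2 = 0

/-- Backward difference `u'_ℓ = (u_ℓ - u_{ℓ-1})/ε`. -/
def bd (ε : ℝ) (u : ℤ → ℝ × ℝ) (ℓ : ℤ) : ℝ × ℝ := ε⁻¹ • (u ℓ - u (ℓ - 1))

/-- The inner product `⟨v,w⟩ = ε ∑_{ℓ=1}^N v_ℓ · w_ℓ`. -/
def ip (N : ℕ) (ε : ℝ) (v w : ℤ → ℝ × ℝ) : ℝ :=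
  ε * ∑ ℓ ∈ Finset.Icc (1 : ℤ) (N : ℤ), edot (v ℓ) (w ℓ)

/-- The norm `‖v‖_{ℓ²_ε}`. -/
def nrm (N : ℕ) (ε : ℝ) (v : ℤ → ℝ × ℝ) : ℝ :=
  Real.sqrt (ε * ∑ ℓ ∈ Finset.Icc (1 : ℤ) (N : ℤ), (enorm2 (v ℓ)) ^ 2)

/-- The atomistic energy `E^a`. -/
def Ea (N : ℕ) (ε : ℝ) (φ : ℝ → ℝ) (y : ℤ → ℝ × ℝ) : ℝ :=
  ε * ∑ ℓ ∈ Finset.Icc (1 : ℤ) (N : ℤ),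
    (φ (enorm2 (bd ε y ℓ)) + φ (enorm2 (bd ε y (ℓ + 1) + bd ε y ℓ)))

/-- The Cauchy–Born energy `E^CB`. -/
def ECB (N : ℕ) (ε : ℝ) (φ : ℝ → ℝ) (y : ℤ → ℝ × ℝ) : ℝ :=
  ε * ∑ ℓ ∈ Finset.Icc (1 : ℤ) (N : ℤ),
    (φ (enorm2 (bd ε y ℓ)) + φ (2 * enorm2 (bd ε y ℓ)))

/-- The bond-angle energy `E^b`. -/
def Eb (N : ℕ) (ε α : ℝ) (y : ℤ → ℝ × ℝ) : ℝ :=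
  ε * ∑ ℓ ∈ Finset.Icc (1 : ℤ) (N : ℤ),
    α * (1 - edot (bd ε y (ℓ + 1)) (bd ε y ℓ) /
      (enorm2 (bd ε y (ℓ + 1)) * enorm2 (bd ε y ℓ)))

/-- The quasi-nonlocal energy `E^QNL`. -/
def EQNL (N K : ℕ) (ε : ℝ) (φ : ℝ → ℝ) (y : ℤ → ℝ × ℝ) : ℝ :=
  ε * ∑ ℓ ∈ Finset.Icc (1 : ℤ) (N : ℤ), φ (enorm2 (bd ε y ℓ))
  + ε * ∑ ℓ ∈ Finset.Icc (1 : ℤ) (K : ℤ), φ (enorm2 (bd ε y (ℓ + 1) + bd ε y ℓ))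
  + ε * ∑ ℓ ∈ Finset.Icc ((K : ℤ) + 2) (N : ℤ), φ (2 * enorm2 (bd ε y ℓ))
  + ε / 2 * φ (2 * enorm2 (bd ε y 1)) + ε / 2 * φ (2 * enorm2 (bd ε y ((K : ℤ) + 1)))

/-- First variation `δE(y)[u] = (d/dt) E(y + t u) |_{t=0}`. -/
def dE (E : (ℤ → ℝ × ℝ) → ℝ) (y u : ℤ → ℝ × ℝ) : ℝ :=
  deriv (fun t : ℝ => E (fun ℓ => y ℓ + t • u ℓ)) 0

/-- Second variation `δ²E(y)[u,v] = (∂²/∂t∂s) E(y + t u + s v) |_{t=s=0}`. -/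
def d2E (E : (ℤ → ℝ × ℝ) → ℝ) (y u v : ℤ → ℝ × ℝ) : ℝ :=
  deriv (fun s : ℝ => deriv (fun t : ℝ => E (fun ℓ => y ℓ + t • u ℓ + s • v ℓ)) 0) 0

/-- The linear chain `y_{F,ℓ} = (Fεℓ, 0)`. -/
def yLin (ε F : ℝ) : ℤ → ℝ × ℝ := fun ℓ => (F * ε * ℓ, 0)

/-- The uniform circular chain of radius `R = Fε/(2 sin(πε))`. -/
def yCirc (ε F : ℝ) : ℤ → ℝ × ℝ := fun ℓ =>
  (F * ε / (2 * Real.sin (π * ε)) * Real.cos (2 * π * ε * ℓ),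
   F * ε / (2 * Real.sin (π * ε)) * Real.sin (2 * π * ε * ℓ))



lemma sum_Icc_int_succ {M : Type*} [AddCommMonoid M] (n : ℕ) (f : ℤ → M) :
    ∑ ℓ ∈ Finset.Icc (1:ℤ) ((n:ℤ)+1), f ℓ = (∑ ℓ ∈ Finset.Icc (1:ℤ) (n:ℤ), f ℓ) + f ((n:ℤ)+1) := by
  have h : Finset.Icc (1:ℤ) ((n:ℤ)+1) = insert ((n:ℤ)+1) (Finset.Icc (1:ℤ) (n:ℤ)) := by
    ext x; simp only [Finset.mem_Icc, Finset.mem_insert]; omega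
  rw [h, Finset.sum_insert (by simp)]
  exact add_comm _ _

lemma sum_Icc_eq_range {M : Type*} [AddCommMonoid M] (N : ℕ) (f : ℤ → M) :
    ∑ ℓ ∈ Finset.Icc (1:ℤ) (N:ℤ), f ℓ = ∑ k ∈ Finset.range N, f ((k:ℤ)+1) := by
  induction N with
  | zero => simp
  | succ n ih =>
      rw [Finset.sum_range_succ, ← ih]
      push_cast
      exact sum_Icc_int_succ n f

lemma per_shift {M : Type*} [AddCommMonoid M] (N : ℕ) (hN : 1 ≤ N) (g : ℤ → M)
    (hg : ∀ ℓ, g (ℓ + (N:ℤ)) = g ℓ) :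
    ∑ ℓ ∈ Finset.Icc (1:ℤ) (N:ℤ), g (ℓ + 1) = ∑ ℓ ∈ Finset.Icc (1:ℤ) (N:ℤ), g ℓ := by
  have h1 : ∑ ℓ ∈ Finset.Icc (1:ℤ) (N:ℤ), g (ℓ + 1)
      = ∑ ℓ ∈ Finset.Icc (2:ℤ) ((N:ℤ)+1), g ℓ := by
    rw [show (2:ℤ) = 1 + 1 by ring, show (N:ℤ)+1 = (N:ℤ)+1 by ring,
      ← Finset.map_add_right_Icc (1:ℤ) (N:ℤ) 1, Finset.sum_map]
    rfl
  have h2 : Finset.Icc (2:ℤ) ((N:ℤ)+1) = insert ((N:ℤ)+1) (Finset.Icc (2:ℤ) (N:ℤ)) := by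
    ext x; simp only [Finset.mem_Icc, Finset.mem_insert]; omega
  have h3 : Finset.Icc (1:ℤ) (N:ℤ) = insert (1:ℤ) (Finset.Icc (2:ℤ) (N:ℤ)) := by
    ext x; simp only [Finset.mem_Icc, Finset.mem_insert]; omega
  have h4 : g ((N:ℤ)+1) = g 1 := by rw [add_comm]; exact hg 1
  have h5 : ((N:ℤ)+1) ∉ Finset.Icc (2:ℤ) (N:ℤ) := by simp
  have h6 : (1:ℤ) ∉ Finset.Icc (2:ℤ) (N:ℤ) := by simp
  rw [h1, h2, h3, Finset.sum_insert h5, Finset.sum_insert h6, h4]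

lemma per_shift' {M : Type*} [AddCommMonoid M] (N : ℕ) (hN : 1 ≤ N) (g : ℤ → M)
    (hg : ∀ ℓ, g (ℓ + (N:ℤ)) = g ℓ) :
    ∑ ℓ ∈ Finset.Icc (1:ℤ) (N:ℤ), g (ℓ - 1) = ∑ ℓ ∈ Finset.Icc (1:ℤ) (N:ℤ), g ℓ := by
  have := per_shift N hN (fun ℓ => g (ℓ - 1)) (fun ℓ => by
    show g (ℓ + (N:ℤ) - 1) = g (ℓ - 1)
    rw [show ℓ + (N:ℤ) - 1 = (ℓ - 1) + (N:ℤ) by ring]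
    exact hg (ℓ-1))
  simp only [add_sub_cancel_right] at this
  exact this.symm

/-- extension of vanishing on the window to all of ℤ for periodic functions -/
lemma per_ext {M : Type*} (N : ℕ) (hN : 1 ≤ N) (g : ℤ → M)
    (hg : ∀ ℓ, g (ℓ + (N:ℤ)) = g ℓ) (ℓ m : ℤ) (h : ℓ % (N:ℤ) = m % (N:ℤ)) : g ℓ = g m := by
  have key : ∀ k : ℤ, ∀ j : ℤ, g (j + k * (N:ℤ)) = g j := by
    intro k
    induction k using Int.induction_on with
    | zero => simp
    | succ n ih => intro j
                   rw [show j + ((n:ℤ)+1) * (N:ℤ) = (j + n * N) + N by ring, hg, ih]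
    | pred n ih => intro j
                   have := hg (j + (-(n:ℤ)-1) * (N:ℤ))
                   rw [show j + (-(n:ℤ)-1) * (N:ℤ) + (N:ℤ) = j + (-(n:ℤ)) * N by ring] at this
                   rw [← this, ih]
  have hd : (N:ℤ) ∣ (ℓ - m) :=
    Int.dvd_of_emod_eq_zero (Int.emod_eq_emod_iff_emod_sub_eq_zero.1 h)
  obtain ⟨k, hk⟩ := hd
  rw [show ℓ = m + k * (N:ℤ) by linear_combination hk, key]


/-- `ce N j = exp(2πi j/N)` -/
def ce (N : ℕ) (j : ℤ) : ℂ := Complex.exp (((2 * π * (j:ℝ) / (N:ℝ) : ℝ) : ℂ) * Complex.I)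

lemma ce_zero (N : ℕ) : ce N 0 = 1 := by simp [ce]

lemma ce_add (N : ℕ) (a b : ℤ) : ce N a * ce N b = ce N (a + b) := by
  rw [ce, ce, ce, ← Complex.exp_add]
  congr 1
  push_cast
  ring

lemma ce_conj (N : ℕ) (j : ℤ) : (starRingEnd ℂ) (ce N j) = ce N (-j) := by
  rw [ce, ce, ← Complex.exp_conj, map_mul, Complex.conj_I, Complex.conj_ofReal]
  congr 1
  push_cast
  ring

lemma ce_dvd (N : ℕ) (hN : 0 < N) {j : ℤ} (hj : (N:ℤ) ∣ j) : ce N j = 1 := by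
  obtain ⟨m, rfl⟩ := hj
  have hN' : (N:ℝ) ≠ 0 := Nat.cast_ne_zero.2 hN.ne'
  rw [ce]
  have h : (2 * π * ((((N:ℤ) * m : ℤ)):ℝ) / (N:ℝ) : ℝ) = (m:ℝ) * (2 * π) := by
    push_cast; field_simp
  rw [h]
  have := Complex.exp_int_mul_two_pi_mul_I m
  rw [← this]
  congr 1
  push_cast
  ring

lemma ce_eq_one_iff (N : ℕ) (hN : 0 < N) {j : ℤ} : ce N j = 1 ↔ (N:ℤ) ∣ j := by
  constructor
  · intro h
    rw [ce, Complex.exp_eq_one_iff] at h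
    obtain ⟨n, hn⟩ := h
    have him := congrArg Complex.im hn
    simp [Complex.mul_im, Complex.ofReal_re, Complex.ofReal_im,
      Complex.I_re, Complex.I_im] at him
    have hN' : (N:ℝ) ≠ 0 := Nat.cast_ne_zero.2 hN.ne'
    field_simp at him
    have h2 : (j:ℝ) = (n:ℝ) * (N:ℝ) :=
      mul_left_cancel₀ (show (2*π : ℝ) ≠ 0 by positivity)
        (by linear_combination (2*π) * him)
    have h3 : j = n * (N:ℤ) := by exact_mod_cast h2
    exact ⟨n, by linear_combination h3⟩
  · exact ce_dvd N hN

lemma ce_period (N : ℕ) (hN : 0 < N) (a b : ℤ) (hb : (N:ℤ) ∣ b) : ce N (a + b) = ce N a := by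
  rw [← ce_add N a b, ce_dvd N hN hb, mul_one]

lemma ce_pow (N : ℕ) (j : ℤ) (m : ℕ) : ce N j ^ m = ce N (j * m) := by
  induction m with
  | zero => simp [ce_zero]
  | succ n ih =>
      rw [pow_succ, ih, ce_add]
      congr 1
      push_cast
      ring

lemma ce_geom (N : ℕ) (hN : 0 < N) (j : ℤ) :
    ∑ k ∈ Finset.Icc (1:ℤ) (N:ℤ), ce N (j * k) = if (N:ℤ) ∣ j then (N:ℂ) else 0 := by
  rw [sum_Icc_eq_range]
  by_cases h : (N:ℤ) ∣ j
  · rw [if_pos h]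
    have : ∀ k ∈ Finset.range N, ce N (j * ((k:ℤ)+1)) = 1 := fun k _ =>
      ce_dvd N hN (Dvd.dvd.mul_right h _)
    rw [Finset.sum_congr rfl this]
    simp
  · rw [if_neg h]
    have hz : ce N j ≠ 1 := fun hh => h ((ce_eq_one_iff N hN).1 hh)
    have hterm : ∀ k ∈ Finset.range N, ce N (j * ((k:ℤ)+1)) = ce N j ^ (k+1) := by
      intro k _
      rw [ce_pow]
      congr 1
    rw [Finset.sum_congr rfl hterm]
    have : ∑ k ∈ Finset.range N, ce N j ^ (k+1) = ce N j * ∑ k ∈ Finset.range N, ce N j ^ k := by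
      rw [Finset.mul_sum]
      exact Finset.sum_congr rfl fun k _ => by ring
    rw [this, geom_sum_eq hz]
    have hNpow : ce N j ^ N = 1 := by
      rw [ce_pow]
      exact ce_dvd N hN ⟨j, by ring⟩
    rw [hNpow]
    simp
/-- discrete Fourier transform of a real sequence, over the window `[1,N]` -/
def dft (N : ℕ) (v : ℤ → ℝ) (k : ℤ) : ℂ :=
  ∑ ℓ ∈ Finset.Icc (1:ℤ) (N:ℤ), (v ℓ : ℂ) * ce N (-(k * ℓ))

lemma dft_conj (N : ℕ) (v : ℤ → ℝ) (k : ℤ) :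
    (starRingEnd ℂ) (dft N v k) = ∑ m ∈ Finset.Icc (1:ℤ) (N:ℤ), (v m : ℂ) * ce N (k * m) := by
  rw [dft, map_sum]
  refine Finset.sum_congr rfl fun m _ => ?_
  rw [map_mul, Complex.conj_ofReal, ce_conj, neg_neg]

lemma parseval (N : ℕ) (hN : 0 < N) (v : ℤ → ℝ) :
    ∑ k ∈ Finset.Icc (1:ℤ) (N:ℤ), Complex.normSq (dft N v k)
      = (N:ℝ) * ∑ ℓ ∈ Finset.Icc (1:ℤ) (N:ℤ), (v ℓ)^2 := by
  have key : ∑ k ∈ Finset.Icc (1:ℤ) (N:ℤ), dft N v k * (starRingEnd ℂ) (dft N v k)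
      = (N:ℂ) * ∑ ℓ ∈ Finset.Icc (1:ℤ) (N:ℤ), ((v ℓ : ℂ))^2 := by
    have step1 : ∀ k : ℤ, dft N v k * (starRingEnd ℂ) (dft N v k)
        = ∑ ℓ ∈ Finset.Icc (1:ℤ) (N:ℤ), ∑ m ∈ Finset.Icc (1:ℤ) (N:ℤ),
            (v ℓ : ℂ) * (v m : ℂ) * ce N (k * (m - ℓ)) := by
      intro k
      rw [dft_conj, dft, Finset.sum_mul_sum]
      refine Finset.sum_congr rfl fun ℓ _ => Finset.sum_congr rfl fun m _ => ?_
      rw [show (v ℓ : ℂ) * ce N (-(k*ℓ)) * ((v m : ℂ) * ce N (k*m))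
          = (v ℓ : ℂ) * (v m : ℂ) * (ce N (-(k*ℓ)) * ce N (k*m)) by ring, ce_add]
      congr 2
      ring
    calc ∑ k ∈ Finset.Icc (1:ℤ) (N:ℤ), dft N v k * (starRingEnd ℂ) (dft N v k)
        = ∑ k ∈ Finset.Icc (1:ℤ) (N:ℤ), ∑ ℓ ∈ Finset.Icc (1:ℤ) (N:ℤ),
            ∑ m ∈ Finset.Icc (1:ℤ) (N:ℤ), (v ℓ : ℂ) * (v m : ℂ) * ce N (k * (m - ℓ)) :=
          Finset.sum_congr rfl fun k _ => step1 k
      _ = ∑ ℓ ∈ Finset.Icc (1:ℤ) (N:ℤ), ∑ m ∈ Finset.Icc (1:ℤ) (N:ℤ),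
            ∑ k ∈ Finset.Icc (1:ℤ) (N:ℤ), (v ℓ : ℂ) * (v m : ℂ) * ce N (k * (m - ℓ)) := by
          rw [Finset.sum_comm]
          exact Finset.sum_congr rfl fun ℓ _ => Finset.sum_comm
      _ = ∑ ℓ ∈ Finset.Icc (1:ℤ) (N:ℤ), ∑ m ∈ Finset.Icc (1:ℤ) (N:ℤ),
            (v ℓ : ℂ) * (v m : ℂ) * (if (N:ℤ) ∣ (m - ℓ) then (N:ℂ) else 0) := by
          refine Finset.sum_congr rfl fun ℓ _ => Finset.sum_congr rfl fun m _ => ?_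
          rw [← Finset.mul_sum]
          congr 1
          rw [← ce_geom N hN (m - ℓ)]
          exact Finset.sum_congr rfl fun k _ => by rw [mul_comm k (m - ℓ)]
      _ = ∑ ℓ ∈ Finset.Icc (1:ℤ) (N:ℤ), (v ℓ : ℂ) * (v ℓ : ℂ) * (N:ℂ) := by
          refine Finset.sum_congr rfl fun ℓ hℓ => ?_
          rw [Finset.sum_eq_single_of_mem ℓ hℓ]
          · rw [if_pos (by simp)]
          · intro m hm hne
            rw [if_neg, mul_zero]
            intro hdvd
            simp only [Finset.mem_Icc] at hℓ hm
            obtain ⟨c, hc⟩ := hdvd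
            have hc0 : c = 0 := by
              rcases lt_trichotomy c 0 with h | h | h
              · nlinarith [hℓ.1, hℓ.2, hm.1, hm.2]
              · exact h
              · nlinarith [hℓ.1, hℓ.2, hm.1, hm.2]
            rw [hc0, mul_zero] at hc
            exact hne (by omega)
      _ = (N:ℂ) * ∑ ℓ ∈ Finset.Icc (1:ℤ) (N:ℤ), ((v ℓ : ℂ))^2 := by
          rw [Finset.mul_sum]
          exact Finset.sum_congr rfl fun ℓ _ => by ring
  have cast1 : ((∑ k ∈ Finset.Icc (1:ℤ) (N:ℤ), Complex.normSq (dft N v k) : ℝ) : ℂ)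
      = ∑ k ∈ Finset.Icc (1:ℤ) (N:ℤ), dft N v k * (starRingEnd ℂ) (dft N v k) := by
    push_cast
    exact Finset.sum_congr rfl fun k _ => (Complex.mul_conj (dft N v k)).symm
  have cast2 : (((N:ℝ) * ∑ ℓ ∈ Finset.Icc (1:ℤ) (N:ℤ), (v ℓ)^2 : ℝ) : ℂ)
      = (N:ℂ) * ∑ ℓ ∈ Finset.Icc (1:ℤ) (N:ℤ), ((v ℓ : ℂ))^2 := by push_cast; ring
  have := cast1.trans (key.trans cast2.symm)
  exact_mod_cast this

lemma dft_diff (N : ℕ) (hN : 1 ≤ N) (v : ℤ → ℝ) (hv : ∀ ℓ, v (ℓ + (N:ℤ)) = v ℓ) (k : ℤ) :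
    dft N (fun ℓ => v ℓ - v (ℓ - 1)) k = (1 - ce N (-k)) * dft N v k := by
  have hsplit : dft N (fun ℓ => v ℓ - v (ℓ - 1)) k
      = dft N v k - ∑ ℓ ∈ Finset.Icc (1:ℤ) (N:ℤ), (v (ℓ-1) : ℂ) * ce N (-(k * ℓ)) := by
    rw [dft, dft, ← Finset.sum_sub_distrib]
    refine Finset.sum_congr rfl fun ℓ _ => ?_
    push_cast
    ring
  have hper : ∀ ℓ : ℤ, (fun ℓ => (v ℓ : ℂ) * ce N (-(k * (ℓ+1)))) (ℓ + (N:ℤ))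
      = (fun ℓ => (v ℓ : ℂ) * ce N (-(k * (ℓ+1)))) ℓ := by
    intro ℓ
    simp only [hv]
    congr 1
    rw [show (-(k * (ℓ + (N:ℤ) + 1))) = (-(k * (ℓ+1))) + (-k) * (N:ℤ) by ring]
    exact ce_period N (by omega) _ _ ⟨-k, by ring⟩
  have hshift : ∑ ℓ ∈ Finset.Icc (1:ℤ) (N:ℤ), (v (ℓ-1) : ℂ) * ce N (-(k * ℓ))
      = ∑ ℓ ∈ Finset.Icc (1:ℤ) (N:ℤ), (v ℓ : ℂ) * ce N (-(k * (ℓ+1))) := by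
    have := per_shift' N hN (fun ℓ => (v ℓ : ℂ) * ce N (-(k * (ℓ+1)))) hper
    rw [← this]
    refine Finset.sum_congr rfl fun ℓ _ => ?_
    congr 2
    ring
  have hfactor : ∑ ℓ ∈ Finset.Icc (1:ℤ) (N:ℤ), (v ℓ : ℂ) * ce N (-(k * (ℓ+1)))
      = ce N (-k) * dft N v k := by
    rw [dft, Finset.mul_sum]
    refine Finset.sum_congr rfl fun ℓ _ => ?_
    rw [show (-(k * (ℓ+1))) = (-(k * ℓ)) + (-k) by ring, ← ce_add]
    ring
  rw [hsplit, hshift, hfactor]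
  ring

lemma normSq_one_sub_ce (N : ℕ) (k : ℤ) :
    Complex.normSq (1 - ce N (-k)) = 2 - 2 * Real.cos (2 * π * (k:ℝ) / (N:ℝ)) := by
  rw [ce]
  have harg : (2 * π * (((-k : ℤ)):ℝ) / (N:ℝ) : ℝ) = -(2 * π * (k:ℝ) / (N:ℝ)) := by
    push_cast; ring
  rw [harg, Complex.normSq_apply]
  simp only [Complex.sub_re, Complex.sub_im, Complex.one_re, Complex.one_im,
    Complex.exp_ofReal_mul_I_re, Complex.exp_ofReal_mul_I_im, Real.cos_neg, Real.sin_neg]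
  nlinarith [Real.sin_sq_add_cos_sq (2 * π * (k:ℝ) / (N:ℝ))]

lemma spectral (N : ℕ) (hN : 4 ≤ N) (v : ℤ → ℝ) (hv : ∀ ℓ, v (ℓ + (N:ℤ)) = v ℓ)
    (hm : ∑ ℓ ∈ Finset.Icc (1:ℤ) (N:ℤ), v ℓ = 0) :
    (2 - 2 * Real.cos (2 * π / (N:ℝ))) * ∑ ℓ ∈ Finset.Icc (1:ℤ) (N:ℤ), (v ℓ)^2
      ≤ ∑ ℓ ∈ Finset.Icc (1:ℤ) (N:ℤ), (v ℓ - v (ℓ-1))^2 := by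
  have hN0 : 0 < N := by omega
  have hN1 : 1 ≤ N := by omega
  have hNr : (0:ℝ) < (N:ℝ) := by exact_mod_cast hN0
  -- dft of v at k = N vanishes
  have hdftN : dft N v (N:ℤ) = 0 := by
    rw [dft]
    have : ∀ ℓ ∈ Finset.Icc (1:ℤ) (N:ℤ), (v ℓ : ℂ) * ce N (-((N:ℤ) * ℓ)) = (v ℓ : ℂ) := by
      intro ℓ _
      rw [ce_dvd N hN0 ⟨-ℓ, by ring⟩, mul_one]
    rw [Finset.sum_congr rfl this]
    rw [show (∑ ℓ ∈ Finset.Icc (1:ℤ) (N:ℤ), ((v ℓ : ℂ)))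
        = (((∑ ℓ ∈ Finset.Icc (1:ℤ) (N:ℤ), v ℓ : ℝ)) : ℂ) by push_cast; rfl, hm]
    simp
  -- termwise comparison
  have hterm : ∀ k ∈ Finset.Icc (1:ℤ) (N:ℤ),
      (2 - 2 * Real.cos (2 * π / (N:ℝ))) * Complex.normSq (dft N v k)
        ≤ Complex.normSq (1 - ce N (-k)) * Complex.normSq (dft N v k) := by
    intro k hk
    simp only [Finset.mem_Icc] at hk
    by_cases hkN : k = (N:ℤ)
    · rw [hkN, hdftN]
      simp
    · have hk' : 1 ≤ k ∧ k ≤ (N:ℤ) - 1 := ⟨hk.1, by omega⟩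
      have hcos : Real.cos (2 * π * (k:ℝ) / (N:ℝ)) ≤ Real.cos (2 * π / (N:ℝ)) := by
        have hkr1 : (1:ℝ) ≤ (k:ℝ) := by exact_mod_cast hk'.1
        have hkr2 : (k:ℝ) ≤ (N:ℝ) - 1 := by
          have : ((k:ℤ):ℝ) ≤ (((N:ℤ) - 1 : ℤ):ℝ) := by exact_mod_cast hk'.2
          push_cast at this
          linarith
        by_cases hhalf : 2 * (k:ℝ) ≤ (N:ℝ)
        · apply Real.cos_le_cos_of_nonneg_of_le_pi
          · positivity
          · rw [div_le_iff₀ hNr]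
            nlinarith [Real.pi_pos]
          · rw [div_le_div_iff₀ hNr hNr]
            nlinarith [mul_nonneg (mul_nonneg (by positivity : (0:ℝ) ≤ 2*π)
              (sub_nonneg.2 hkr1)) hNr.le]
        · push_neg at hhalf
          have h1 : Real.cos (2 * π * (k:ℝ) / (N:ℝ))
              = Real.cos (2 * π * ((N:ℝ) - (k:ℝ)) / (N:ℝ)) := by
            rw [show 2 * π * ((N:ℝ) - (k:ℝ)) / (N:ℝ)
                = 2 * π - 2 * π * (k:ℝ) / (N:ℝ) by field_simp, Real.cos_two_pi_sub]
          rw [h1]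
          apply Real.cos_le_cos_of_nonneg_of_le_pi
          · positivity
          · rw [div_le_iff₀ hNr]
            nlinarith [Real.pi_pos]
          · rw [div_le_div_iff₀ hNr hNr]
            nlinarith [mul_nonneg (mul_nonneg (by positivity : (0:ℝ) ≤ 2*π)
              (sub_nonneg.2 (show (1:ℝ) ≤ (N:ℝ) - (k:ℝ) by linarith))) hNr.le]
      nlinarith [Complex.normSq_nonneg (dft N v k), normSq_one_sub_ce N k]
  -- assemble
  have hw := parseval N hN0 (fun ℓ => v ℓ - v (ℓ-1))
  have hv' := parseval N hN0 v
  have hstep : ∑ k ∈ Finset.Icc (1:ℤ) (N:ℤ), Complex.normSq (dft N (fun ℓ => v ℓ - v (ℓ-1)) k)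
      = ∑ k ∈ Finset.Icc (1:ℤ) (N:ℤ), Complex.normSq (1 - ce N (-k)) * Complex.normSq (dft N v k) := by
    refine Finset.sum_congr rfl fun k _ => ?_
    rw [dft_diff N hN1 v hv k, Complex.normSq_mul]
  have hineq : (2 - 2 * Real.cos (2 * π / (N:ℝ)))
        * ∑ k ∈ Finset.Icc (1:ℤ) (N:ℤ), Complex.normSq (dft N v k)
      ≤ ∑ k ∈ Finset.Icc (1:ℤ) (N:ℤ), Complex.normSq (1 - ce N (-k)) * Complex.normSq (dft N v k) := by
    rw [Finset.mul_sum]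
    exact Finset.sum_le_sum hterm
  rw [hv'] at hineq
  rw [hstep] at hw
  -- (2-2cos) * (N * Σ v²) ≤ N * Σ (Δv)²
  have final : (2 - 2 * Real.cos (2 * π / (N:ℝ))) * ((N:ℝ) * ∑ ℓ ∈ Finset.Icc (1:ℤ) (N:ℤ), (v ℓ)^2)
      ≤ (N:ℝ) * ∑ ℓ ∈ Finset.Icc (1:ℤ) (N:ℤ), (v ℓ - v (ℓ-1))^2 := by
    calc (2 - 2 * Real.cos (2 * π / (N:ℝ))) * ((N:ℝ) * ∑ ℓ ∈ Finset.Icc (1:ℤ) (N:ℤ), (v ℓ)^2)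
        ≤ ∑ k ∈ Finset.Icc (1:ℤ) (N:ℤ), Complex.normSq (1 - ce N (-k)) * Complex.normSq (dft N v k) := hineq
      _ = (N:ℝ) * ∑ ℓ ∈ Finset.Icc (1:ℤ) (N:ℤ), (v ℓ - v (ℓ-1))^2 := hw
  have final' : (N:ℝ) * ((2 - 2 * Real.cos (2 * π / (N:ℝ)))
        * ∑ ℓ ∈ Finset.Icc (1:ℤ) (N:ℤ), (v ℓ)^2)
      ≤ (N:ℝ) * ∑ ℓ ∈ Finset.Icc (1:ℤ) (N:ℤ), (v ℓ - v (ℓ-1))^2 := by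
    rw [show (N:ℝ) * ((2 - 2 * Real.cos (2 * π / (N:ℝ)))
          * ∑ ℓ ∈ Finset.Icc (1:ℤ) (N:ℤ), (v ℓ)^2)
        = (2 - 2 * Real.cos (2 * π / (N:ℝ)))
          * ((N:ℝ) * ∑ ℓ ∈ Finset.Icc (1:ℤ) (N:ℤ), (v ℓ)^2) by ring]
    exact final
  exact le_of_mul_le_mul_left final' hNr
lemma eigen_sum (N : ℕ) (hN : 1 ≤ N) (b : ℤ → ℝ) (hb : ∀ ℓ, b (ℓ + (N:ℤ)) = b ℓ) (c : ℝ)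
    (he : ∀ ℓ, b (ℓ+1) + b (ℓ-1) = 2 * c * b ℓ) :
    ∑ ℓ ∈ Finset.Icc (1:ℤ) (N:ℤ), (b ℓ - b (ℓ-1))^2
      = (2 - 2*c) * ∑ ℓ ∈ Finset.Icc (1:ℤ) (N:ℤ), (b ℓ)^2 := by
  have h1 : ∑ ℓ ∈ Finset.Icc (1:ℤ) (N:ℤ), (b (ℓ-1))^2
      = ∑ ℓ ∈ Finset.Icc (1:ℤ) (N:ℤ), (b ℓ)^2 :=
    per_shift' N hN (fun ℓ => (b ℓ)^2) (fun ℓ => by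
      show b (ℓ + (N:ℤ))^2 = b ℓ^2; rw [hb])
  have h2 : ∑ ℓ ∈ Finset.Icc (1:ℤ) (N:ℤ), b ℓ * b (ℓ-1)
      = ∑ ℓ ∈ Finset.Icc (1:ℤ) (N:ℤ), b (ℓ+1) * b ℓ := by
    have H := per_shift' N hN (fun ℓ => b (ℓ+1) * b ℓ) (fun ℓ => by
      show b (ℓ + (N:ℤ) + 1) * b (ℓ + (N:ℤ)) = b (ℓ+1) * b ℓ
      rw [show ℓ + (N:ℤ) + 1 = (ℓ+1) + (N:ℤ) by ring, hb, hb])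
    have e : ∀ ℓ ∈ Finset.Icc (1:ℤ) (N:ℤ),
        (fun ℓ => b (ℓ+1) * b ℓ) (ℓ - 1) = b ℓ * b (ℓ-1) := by
      intro ℓ _
      show b (ℓ - 1 + 1) * b (ℓ - 1) = b ℓ * b (ℓ - 1)
      rw [show ℓ - 1 + 1 = ℓ by ring]
    rw [Finset.sum_congr rfl e] at H
    exact H
  have expand : ∑ ℓ ∈ Finset.Icc (1:ℤ) (N:ℤ), (b ℓ - b (ℓ-1))^2
      = (∑ ℓ ∈ Finset.Icc (1:ℤ) (N:ℤ), (b ℓ)^2)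
        + (∑ ℓ ∈ Finset.Icc (1:ℤ) (N:ℤ), (b (ℓ-1))^2)
        - 2 * ∑ ℓ ∈ Finset.Icc (1:ℤ) (N:ℤ), b ℓ * b (ℓ-1) := by
    rw [← Finset.sum_add_distrib, Finset.mul_sum, ← Finset.sum_sub_distrib]
    exact Finset.sum_congr rfl fun ℓ _ => by ring
  have e1 : ∑ ℓ ∈ Finset.Icc (1:ℤ) (N:ℤ), (b (ℓ+1) + b (ℓ-1)) * b ℓ
      = ∑ ℓ ∈ Finset.Icc (1:ℤ) (N:ℤ), 2*c*(b ℓ)^2 :=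
    Finset.sum_congr rfl fun ℓ _ => by rw [he ℓ]; ring
  have e2 : ∑ ℓ ∈ Finset.Icc (1:ℤ) (N:ℤ), (b (ℓ+1) + b (ℓ-1)) * b ℓ
      = (∑ ℓ ∈ Finset.Icc (1:ℤ) (N:ℤ), b (ℓ+1) * b ℓ)
        + ∑ ℓ ∈ Finset.Icc (1:ℤ) (N:ℤ), b ℓ * b (ℓ-1) := by
    rw [← Finset.sum_add_distrib]
    exact Finset.sum_congr rfl fun ℓ _ => by ring
  have e3 : ∑ ℓ ∈ Finset.Icc (1:ℤ) (N:ℤ), 2*c*(b ℓ)^2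
      = 2*c* ∑ ℓ ∈ Finset.Icc (1:ℤ) (N:ℤ), (b ℓ)^2 := by
    rw [Finset.mul_sum]
  linarith [expand, h1, h2, e1, e2, e3]

lemma sq_sum_shift (N : ℕ) (hN : 1 ≤ N) (p : ℤ → ℝ) (hp : ∀ ℓ, p (ℓ + (N:ℤ)) = p ℓ) :
    ∑ ℓ ∈ Finset.Icc (1:ℤ) (N:ℤ), (p (ℓ+1) + p ℓ)^2
      = 4 * (∑ ℓ ∈ Finset.Icc (1:ℤ) (N:ℤ), (p ℓ)^2)
        - ∑ ℓ ∈ Finset.Icc (1:ℤ) (N:ℤ), (p ℓ - p (ℓ-1))^2 := by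
  have h1 : ∑ ℓ ∈ Finset.Icc (1:ℤ) (N:ℤ), (p (ℓ+1))^2
      = ∑ ℓ ∈ Finset.Icc (1:ℤ) (N:ℤ), (p ℓ)^2 :=
    per_shift N hN (fun ℓ => (p ℓ)^2) (fun ℓ => by
      show p (ℓ + (N:ℤ))^2 = p ℓ^2; rw [hp])
  have h2 : ∑ ℓ ∈ Finset.Icc (1:ℤ) (N:ℤ), (p ℓ - p (ℓ-1))^2
      = ∑ ℓ ∈ Finset.Icc (1:ℤ) (N:ℤ), (p (ℓ+1) - p ℓ)^2 := by
    have H := per_shift' N hN (fun ℓ => (p (ℓ+1) - p ℓ)^2) (fun ℓ => by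
      show (p (ℓ + (N:ℤ) + 1) - p (ℓ + (N:ℤ)))^2 = (p (ℓ+1) - p ℓ)^2
      rw [show ℓ + (N:ℤ) + 1 = (ℓ+1) + (N:ℤ) by ring, hp, hp])
    have e : ∀ ℓ ∈ Finset.Icc (1:ℤ) (N:ℤ),
        (fun ℓ => (p (ℓ+1) - p ℓ)^2) (ℓ - 1) = (p ℓ - p (ℓ-1))^2 := by
      intro ℓ _
      show (p (ℓ - 1 + 1) - p (ℓ - 1))^2 = (p ℓ - p (ℓ-1))^2
      rw [show ℓ - 1 + 1 = ℓ by ring]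
    rw [Finset.sum_congr rfl e] at H
    exact H
  have expand : ∑ ℓ ∈ Finset.Icc (1:ℤ) (N:ℤ), (p (ℓ+1) + p ℓ)^2
      = 2 * (∑ ℓ ∈ Finset.Icc (1:ℤ) (N:ℤ), (p (ℓ+1))^2)
        + 2 * (∑ ℓ ∈ Finset.Icc (1:ℤ) (N:ℤ), (p ℓ)^2)
        - ∑ ℓ ∈ Finset.Icc (1:ℤ) (N:ℤ), (p (ℓ+1) - p ℓ)^2 := by
    rw [Finset.mul_sum, Finset.mul_sum, ← Finset.sum_add_distrib, ← Finset.sum_sub_distrib]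
    exact Finset.sum_congr rfl fun ℓ _ => by ring
  linarith [expand, h1, h2]

lemma enorm2_sq (w : ℝ × ℝ) : enorm2 w ^ 2 = w.1^2 + w.2^2 :=
  Real.sq_sqrt (by positivity)

lemma nrm_sq (N : ℕ) (ε : ℝ) (hε : 0 ≤ ε) (v : ℤ → ℝ × ℝ) :
    nrm N ε v ^ 2 = ε * ∑ ℓ ∈ Finset.Icc (1:ℤ) (N:ℤ), ((v ℓ).1^2 + (v ℓ).2^2) := by
  rw [nrm, Real.sq_sqrt (by positivity)]
  congr 1
  exact Finset.sum_congr rfl fun ℓ _ => enorm2_sq (v ℓ)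

lemma bd_scalar (ε : ℝ) (a : ℤ → ℝ) (ℓ : ℤ) :
    bd ε (fun m => ((a m, 0) : ℝ × ℝ)) ℓ = (ε⁻¹ * (a ℓ - a (ℓ-1)), 0) := by
  rw [bd]
  simp [Prod.ext_iff]

lemma enorm2_x (x : ℝ) : enorm2 (x, 0) = |x| := by
  rw [enorm2]
  simp [Real.sqrt_sq_eq_abs]

/-- positivity of the sum of squares of a nonzero periodic mean-zero sequence's difference -/
lemma sum_sq_pos (N : ℕ) (hN : 1 ≤ N) (g : ℤ → ℝ) (ℓ₀ : ℤ) (hℓ₀ : ℓ₀ ∈ Finset.Icc (1:ℤ) (N:ℤ))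
    (hg : g ℓ₀ ≠ 0) : 0 < ∑ ℓ ∈ Finset.Icc (1:ℤ) (N:ℤ), (g ℓ)^2 := by
  have h1 : (g ℓ₀)^2 ≤ ∑ ℓ ∈ Finset.Icc (1:ℤ) (N:ℤ), (g ℓ)^2 :=
    Finset.single_le_sum (fun ℓ _ => sq_nonneg (g ℓ)) hℓ₀
  have h2 : 0 < (g ℓ₀)^2 := by positivity
  linarith
lemma d2E_lin (N : ℕ) (hN : 4 ≤ N) (ε : ℝ) (hεpos : 0 < ε)
    (φ : ℝ → ℝ) (hφ : ContDiffOn ℝ 2 φ (Set.Ioi 0)) (F : ℝ) (hF : 0 < F) (a : ℤ → ℝ)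
    (p q : ℤ → ℝ) (hp : ∀ ℓ, p ℓ = ε⁻¹ * (a ℓ - a (ℓ-1))) (hq : ∀ ℓ, q ℓ = p (ℓ+1) + p ℓ) :
    d2E (Ea N ε φ) (yLin ε F) (fun ℓ => (a ℓ, 0)) (fun ℓ => (a ℓ, 0)) =
      ε * ∑ ℓ ∈ Finset.Icc (1:ℤ) (N:ℤ),
        (deriv (deriv φ) F * (p ℓ)^2 + deriv (deriv φ) (2*F) * (q ℓ)^2) := by
  have hεne : ε ≠ 0 := hεpos.ne'
  -- the backward difference of the perturbed chain
  have hbd : ∀ (t s : ℝ) (ℓ : ℤ),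
      bd ε (fun m => yLin ε F m + t • ((a m, 0) : ℝ × ℝ) + s • ((a m, 0) : ℝ × ℝ)) ℓ
        = (F + (t+s) * p ℓ, 0) := by
    intro t s ℓ
    rw [bd]
    simp only [yLin, Prod.smul_mk, smul_eq_mul, mul_zero, Prod.mk_add_mk, add_zero,
      Prod.mk_sub_mk]
    rw [Prod.ext_iff]
    constructor
    · simp only [hp]
      push_cast
      field_simp
      ring
    · simp
  -- the energy along the two-parameter family
  set g : ℝ → ℝ := fun r => ε * ∑ ℓ ∈ Finset.Icc (1:ℤ) (N:ℤ),
      (φ (|F + r * p ℓ|) + φ (|2*F + r * q ℓ|)) with hg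
  have hEa : ∀ t s : ℝ,
      Ea N ε φ (fun m => yLin ε F m + t • ((a m, 0) : ℝ × ℝ) + s • ((a m, 0) : ℝ × ℝ))
        = g (t+s) := by
    intro t s
    rw [Ea, hg]
    congr 1
    refine Finset.sum_congr rfl fun ℓ _ => ?_
    rw [hbd t s ℓ, hbd t s (ℓ+1)]
    have hpair : ((F + (t+s) * p (ℓ+1), 0) : ℝ × ℝ) + (F + (t+s) * p ℓ, 0)
        = (2*F + (t+s) * q ℓ, 0) := by
      rw [Prod.mk_add_mk, add_zero]
      congr 1
      rw [hq]
      ring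
    rw [hpair, enorm2_x, enorm2_x]
  have hred : d2E (Ea N ε φ) (yLin ε F) (fun ℓ => (a ℓ, 0)) (fun ℓ => (a ℓ, 0))
      = deriv (deriv g) 0 := by
    rw [d2E]
    simp only [hEa]
    congr 1
    funext s
    rw [deriv_comp_add_const]
    norm_num
  rw [hred]
  -- bound on the p's and q's
  set B : ℝ := (∑ ℓ ∈ Finset.Icc (1:ℤ) (N:ℤ), (|p ℓ| + |q ℓ|)) + 1 with hB
  have hBsum : 0 ≤ ∑ ℓ ∈ Finset.Icc (1:ℤ) (N:ℤ), (|p ℓ| + |q ℓ|) :=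
    Finset.sum_nonneg fun ℓ _ => by positivity
  have hBpos : 0 < B := by rw [hB]; linarith
  have hBb : ∀ ℓ ∈ Finset.Icc (1:ℤ) (N:ℤ), |p ℓ| ≤ B ∧ |q ℓ| ≤ B := by
    intro ℓ hℓ
    have hsum : |p ℓ| + |q ℓ| ≤ ∑ x ∈ Finset.Icc (1:ℤ) (N:ℤ), (|p x| + |q x|) :=
      Finset.single_le_sum (f := fun x => |p x| + |q x|) (fun i _ => by positivity) hℓ
    have h1 := abs_nonneg (p ℓ)
    have h2 := abs_nonneg (q ℓ)
    rw [hB]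
    constructor <;> linarith
  set δ : ℝ := F / (2*B) with hδ
  have hδpos : 0 < δ := by rw [hδ]; positivity
  have hpos : ∀ r : ℝ, |r| < δ → ∀ ℓ ∈ Finset.Icc (1:ℤ) (N:ℤ),
      0 < F + r * p ℓ ∧ 0 < 2*F + r * q ℓ := by
    intro r hr ℓ hℓ
    obtain ⟨hbp, hbq⟩ := hBb ℓ hℓ
    have hδB : δ * B = F / 2 := by rw [hδ]; field_simp
    have h1 : |r * p ℓ| ≤ |r| * B := by
      rw [abs_mul]; exact mul_le_mul_of_nonneg_left hbp (abs_nonneg r)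
    have h2 : |r * q ℓ| ≤ |r| * B := by
      rw [abs_mul]; exact mul_le_mul_of_nonneg_left hbq (abs_nonneg r)
    have h3 : |r| * B < F / 2 := by
      rw [← hδB]; exact mul_lt_mul_of_pos_right hr hBpos
    have habs1 : |r * p ℓ| < F / 2 := lt_of_le_of_lt h1 h3
    have habs2 : |r * q ℓ| < F / 2 := lt_of_le_of_lt h2 h3
    have h4 := (abs_lt.1 habs1).1
    have h5 := (abs_lt.1 habs2).1
    constructor <;> linarith
  -- smooth version of g near 0
  set f : ℝ → ℝ := fun r => ε * ∑ ℓ ∈ Finset.Icc (1:ℤ) (N:ℤ),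
      (φ (F + r * p ℓ) + φ (2*F + r * q ℓ)) with hf
  have hgf : ∀ r : ℝ, |r| < δ → g r = f r := by
    intro r hr
    show ε * ∑ ℓ ∈ Finset.Icc (1:ℤ) (N:ℤ), (φ (|F + r * p ℓ|) + φ (|2*F + r * q ℓ|))
        = ε * ∑ ℓ ∈ Finset.Icc (1:ℤ) (N:ℤ), (φ (F + r * p ℓ) + φ (2*F + r * q ℓ))
    congr 1
    refine Finset.sum_congr rfl fun ℓ hℓ => ?_
    obtain ⟨h1, h2⟩ := hpos r hr ℓ hℓ
    rw [abs_of_pos h1, abs_of_pos h2]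
  have hball : ∀ r ∈ Metric.ball (0:ℝ) δ, g r = f r := by
    intro r hr
    rw [Metric.mem_ball, Real.dist_eq, sub_zero] at hr
    exact hgf r hr
  have hgf' : g =ᶠ[nhds (0:ℝ)] f :=
    Filter.eventuallyEq_of_mem (Metric.ball_mem_nhds 0 hδpos) hball
  rw [(hgf'.deriv).deriv_eq]
  -- derivatives of φ
  have hφ1 : ∀ x : ℝ, 0 < x → HasDerivAt φ (deriv φ x) x := fun x hx =>
    ((hφ.differentiableOn (by norm_num)).differentiableAt
      (Ioi_mem_nhds hx)).hasDerivAt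
  have hφd : ContDiffOn ℝ 1 (deriv φ) (Set.Ioi 0) :=
    hφ.deriv_of_isOpen isOpen_Ioi (by norm_num)
  have hφ2 : ∀ x : ℝ, 0 < x → HasDerivAt (deriv φ) (deriv (deriv φ) x) x := fun x hx =>
    ((hφd.differentiableOn (by norm_num)).differentiableAt
      (Ioi_mem_nhds hx)).hasDerivAt
  -- first derivative of f
  set f1 : ℝ → ℝ := fun r => ε * ∑ ℓ ∈ Finset.Icc (1:ℤ) (N:ℤ),
      (deriv φ (F + r * p ℓ) * p ℓ + deriv φ (2*F + r * q ℓ) * q ℓ) with hf1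
  have haff : ∀ (r : ℝ) (ℓ : ℤ), HasDerivAt (fun r : ℝ => F + r * p ℓ) (p ℓ) r := by
    intro r ℓ
    simpa using (hasDerivAt_mul_const (p ℓ)).const_add F
  have haff2 : ∀ (r : ℝ) (ℓ : ℤ), HasDerivAt (fun r : ℝ => 2*F + r * q ℓ) (q ℓ) r := by
    intro r ℓ
    simpa using (hasDerivAt_mul_const (q ℓ)).const_add (2*F)
  have hfd : ∀ r : ℝ, |r| < δ → HasDerivAt f (f1 r) r := by
    intro r hr
    apply HasDerivAt.const_mul
    apply HasDerivAt.fun_sum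
    intro ℓ hℓ
    obtain ⟨h1, h2⟩ := hpos r hr ℓ hℓ
    exact (((hφ1 _ h1).comp r (haff r ℓ))).add (((hφ1 _ h2).comp r (haff2 r ℓ)))
  have hderivf : deriv f =ᶠ[nhds (0:ℝ)] f1 :=
    Filter.eventuallyEq_of_mem (Metric.ball_mem_nhds 0 hδpos) (fun r hr => by
      rw [Metric.mem_ball, Real.dist_eq, sub_zero] at hr
      exact (hfd r hr).deriv)
  rw [hderivf.deriv_eq]
  -- second derivative at 0
  have hfin : HasDerivAt f1 (ε * ∑ ℓ ∈ Finset.Icc (1:ℤ) (N:ℤ),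
      (deriv (deriv φ) F * (p ℓ)^2 + deriv (deriv φ) (2*F) * (q ℓ)^2)) 0 := by
    have hterm : ∀ ℓ ∈ Finset.Icc (1:ℤ) (N:ℤ),
        HasDerivAt (fun r => deriv φ (F + r * p ℓ) * p ℓ + deriv φ (2*F + r * q ℓ) * q ℓ)
          (deriv (deriv φ) F * (p ℓ)^2 + deriv (deriv φ) (2*F) * (q ℓ)^2) 0 := by
      intro ℓ _
      have c1 : HasDerivAt (fun r : ℝ => deriv φ (F + r * p ℓ))
          (deriv (deriv φ) F * p ℓ) 0 := by
        have := (hφ2 (F + 0 * p ℓ) (by simpa using hF)).comp 0 (haff 0 ℓ)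
        simpa [Function.comp_def] using this
      have c2 : HasDerivAt (fun r : ℝ => deriv φ (2*F + r * q ℓ))
          (deriv (deriv φ) (2*F) * q ℓ) 0 := by
        have := (hφ2 (2*F + 0 * q ℓ) (by simpa using (by linarith : (0:ℝ) < 2*F))).comp 0
          (haff2 0 ℓ)
        simpa [Function.comp_def] using this
      have := (c1.mul_const (p ℓ)).add (c2.mul_const (q ℓ))
      exact this.congr_deriv (by ring)
    exact (HasDerivAt.fun_sum hterm).const_mul ε
  exact hfin.deriv
lemma per_all_zero (N : ℕ) (hN : 1 ≤ N) (g : ℤ → ℝ)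
    (hper : ∀ ℓ, g (ℓ + (N:ℤ)) = g ℓ) (h0 : ∀ ℓ ∈ Finset.Icc (1:ℤ) (N:ℤ), g ℓ = 0) :
    ∀ ℓ, g ℓ = 0 := by
  intro ℓ
  have hN0 : (0:ℤ) < (N:ℤ) := by exact_mod_cast (by omega : 0 < N)
  have h1 : 0 ≤ ℓ % (N:ℤ) := Int.emod_nonneg ℓ hN0.ne'
  have h2 : ℓ % (N:ℤ) < (N:ℤ) := Int.emod_lt_of_pos ℓ hN0
  by_cases hm : ℓ % (N:ℤ) = 0
  · have he : g ℓ = g (N:ℤ) := per_ext N hN g hper ℓ (N:ℤ) (by rw [Int.emod_self]; exact hm)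
    rw [he]
    exact h0 (N:ℤ) (by rw [Finset.mem_Icc]; omega)
  · have he : g ℓ = g (ℓ % (N:ℤ)) :=
      per_ext N hN g hper ℓ (ℓ % (N:ℤ)) (Int.emod_emod_of_dvd ℓ dvd_rfl).symm
    rw [he]
    exact h0 _ (by rw [Finset.mem_Icc]; omega)

/-- From `u ≠ 0` constrained periodic mean-zero, the difference `p` is not identically zero
on the window. -/
lemma diff_not_zero (N : ℕ) (hN : 4 ≤ N) (ε : ℝ) (hεpos : 0 < ε) (a : ℤ → ℝ)
    (haper : ∀ ℓ, a (ℓ + (N:ℤ)) = a ℓ) (hamean : ∑ ℓ ∈ Finset.Icc (1:ℤ) (N:ℤ), a ℓ = 0)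
    (hane : ∃ ℓ, a ℓ ≠ 0) :
    0 < ∑ ℓ ∈ Finset.Icc (1:ℤ) (N:ℤ), (ε⁻¹ * (a ℓ - a (ℓ-1)))^2 := by
  rcases lt_or_ge 0 (∑ ℓ ∈ Finset.Icc (1:ℤ) (N:ℤ), (ε⁻¹ * (a ℓ - a (ℓ-1)))^2) with h | h
  · exact h
  exfalso
  have hz : ∑ ℓ ∈ Finset.Icc (1:ℤ) (N:ℤ), (ε⁻¹ * (a ℓ - a (ℓ-1)))^2 = 0 :=
    le_antisymm h (Finset.sum_nonneg fun ℓ _ => sq_nonneg _)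
  have hzero : ∀ ℓ ∈ Finset.Icc (1:ℤ) (N:ℤ), (ε⁻¹ * (a ℓ - a (ℓ-1)))^2 = 0 :=
    (Finset.sum_eq_zero_iff_of_nonneg fun ℓ _ => sq_nonneg _).1 hz
  have hp0 : ∀ ℓ, ε⁻¹ * (a ℓ - a (ℓ-1)) = 0 := by
    apply per_all_zero N (by omega) _ (fun ℓ => by
      rw [show ℓ + (N:ℤ) - 1 = (ℓ-1) + (N:ℤ) by ring, haper, haper])
    intro ℓ hℓ
    exact pow_eq_zero_iff (by norm_num)|>.1 (hzero ℓ hℓ)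
  have hεinv : ε⁻¹ ≠ 0 := inv_ne_zero hεpos.ne'
  have hstep : ∀ ℓ : ℤ, a ℓ = a (ℓ-1) := by
    intro ℓ
    have := hp0 ℓ
    rcases mul_eq_zero.1 this with h | h
    · exact absurd h hεinv
    · linarith
  have hconst : ∀ ℓ : ℤ, a ℓ = a 0 := by
    intro ℓ
    induction ℓ using Int.induction_on with
    | zero => rfl
    | succ n ih => rw [show ((n:ℤ)+1) = (n:ℤ)+1 by rfl, hstep ((n:ℤ)+1),
        show (n:ℤ)+1-1 = (n:ℤ) by ring, ih]
    | pred n ih => rw [show (-(n:ℤ)-1) = (-(n:ℤ))-1 by ring, ← hstep (-(n:ℤ)), ih]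
  have hcard : (Finset.Icc (1:ℤ) (N:ℤ)).card = N := by
    rw [Int.card_Icc]
    simp
  have hsum : ∑ ℓ ∈ Finset.Icc (1:ℤ) (N:ℤ), a ℓ = (N:ℝ) * a 0 := by
    rw [Finset.sum_congr rfl (fun ℓ _ => hconst ℓ), Finset.sum_const, hcard, nsmul_eq_mul]
  have hNr : (0:ℝ) < (N:ℝ) := by exact_mod_cast (by omega : 0 < N)
  have ha0 : a 0 = 0 := by
    rw [hsum] at hamean
    rcases mul_eq_zero.1 hamean with h' | h'
    · exact absurd h' hNr.ne'
    · exact h'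
  obtain ⟨ℓ, hℓ⟩ := hane
  exact hℓ ((hconst ℓ).trans ha0)

/-- Part 1: the second variation formula, for an arbitrary constrained displacement. -/
lemma part1_formula (N : ℕ) (hN : 4 ≤ N) (ε : ℝ) (hε : ε = (N : ℝ)⁻¹)
    (φ : ℝ → ℝ) (hφ : ContDiffOn ℝ 2 φ (Set.Ioi 0)) (F : ℝ) (hF : 0 < F)
    (u : ℤ → ℝ × ℝ) (hu : IsDisp1D N u) :
    d2E (Ea N ε φ) (yLin ε F) u u =
      (deriv (deriv φ) F + 4 * deriv (deriv φ) (2 * F)) * (nrm N ε (bd ε u)) ^ 2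
        - ε ^ 2 * deriv (deriv φ) (2 * F) * (nrm N ε (bd ε (bd ε u))) ^ 2 := by
  have hNr : (0:ℝ) < (N:ℝ) := by exact_mod_cast (by omega : 0 < N)
  have hεpos : 0 < ε := by rw [hε]; positivity
  have hεne : ε ≠ 0 := hεpos.ne'
  set a : ℤ → ℝ := fun ℓ => (u ℓ).1 with ha
  have hua : u = fun ℓ => ((a ℓ, 0) : ℝ × ℝ) := funext fun ℓ => Prod.ext rfl (hu.2 ℓ)
  have haper : ∀ ℓ, a (ℓ + (N:ℤ)) = a ℓ := fun ℓ => congrArg Prod.fst (hu.1.1 ℓ)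
  set p : ℤ → ℝ := fun ℓ => ε⁻¹ * (a ℓ - a (ℓ-1)) with hpdef
  have hpper : ∀ ℓ, p (ℓ + (N:ℤ)) = p ℓ := fun ℓ => by
    show ε⁻¹ * (a (ℓ + (N:ℤ)) - a (ℓ + (N:ℤ) - 1)) = ε⁻¹ * (a ℓ - a (ℓ-1))
    rw [show ℓ + (N:ℤ) - 1 = (ℓ-1) + (N:ℤ) by ring, haper, haper]
  rw [hua]
  rw [d2E_lin N hN ε hεpos φ hφ F hF a p (fun ℓ => p (ℓ+1) + p ℓ)
    (fun ℓ => rfl) (fun ℓ => rfl)]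
  -- scalarize the norms
  have hbd1 : ∀ ℓ, bd ε (fun m => ((a m, 0) : ℝ × ℝ)) ℓ = (p ℓ, 0) := fun ℓ => bd_scalar ε a ℓ
  have hbdfun : bd ε (fun m => ((a m, 0) : ℝ × ℝ)) = fun m => ((p m, 0) : ℝ × ℝ) :=
    funext hbd1
  have hnrm1 : nrm N ε (bd ε (fun m => ((a m, 0) : ℝ × ℝ))) ^ 2
      = ε * ∑ ℓ ∈ Finset.Icc (1:ℤ) (N:ℤ), (p ℓ)^2 := by
    rw [nrm_sq N ε hεpos.le]
    congr 1
    refine Finset.sum_congr rfl fun ℓ _ => ?_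
    rw [hbd1 ℓ]
    norm_num
  have hnrm2 : nrm N ε (bd ε (bd ε (fun m => ((a m, 0) : ℝ × ℝ)))) ^ 2
      = ε * ∑ ℓ ∈ Finset.Icc (1:ℤ) (N:ℤ), (ε⁻¹ * (p ℓ - p (ℓ-1)))^2 := by
    rw [hbdfun, nrm_sq N ε hεpos.le]
    congr 1
    refine Finset.sum_congr rfl fun ℓ _ => ?_
    rw [bd_scalar ε p ℓ]
    norm_num
  rw [hnrm1, hnrm2]
  have hsplit : ∑ ℓ ∈ Finset.Icc (1:ℤ) (N:ℤ),
      (deriv (deriv φ) F * (p ℓ)^2 + deriv (deriv φ) (2*F) * (p (ℓ+1) + p ℓ)^2)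
      = deriv (deriv φ) F * (∑ ℓ ∈ Finset.Icc (1:ℤ) (N:ℤ), (p ℓ)^2)
        + deriv (deriv φ) (2*F) * ∑ ℓ ∈ Finset.Icc (1:ℤ) (N:ℤ), (p (ℓ+1) + p ℓ)^2 := by
    rw [Finset.sum_add_distrib, ← Finset.mul_sum, ← Finset.mul_sum]
  have hq2 := sq_sum_shift N (by omega) p hpper
  have hsum2 : ∑ ℓ ∈ Finset.Icc (1:ℤ) (N:ℤ), (ε⁻¹ * (p ℓ - p (ℓ-1)))^2
      = ε⁻¹^2 * ∑ ℓ ∈ Finset.Icc (1:ℤ) (N:ℤ), (p ℓ - p (ℓ-1))^2 := by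
    rw [Finset.mul_sum]
    exact Finset.sum_congr rfl fun ℓ _ => by ring
  rw [hsplit, hq2, hsum2]
  field_simp
  ring

/-- lower bound for the Rayleigh quotient, plus positivity of the denominator -/
lemma ratio_bound (N : ℕ) (hN : 4 ≤ N) (ε : ℝ) (hε : ε = (N : ℝ)⁻¹)
    (u : ℤ → ℝ × ℝ) (hu : IsDisp1D N u) (hune : u ≠ 0) :
    0 < (nrm N ε (bd ε u)) ^ 2 ∧
    (2 * Real.sin (π * ε) / ε) ^ 2 * (nrm N ε (bd ε u)) ^ 2
      ≤ (nrm N ε (bd ε (bd ε u))) ^ 2 := by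
  have hNr : (0:ℝ) < (N:ℝ) := by exact_mod_cast (by omega : 0 < N)
  have hεpos : 0 < ε := by rw [hε]; positivity
  have hεne : ε ≠ 0 := hεpos.ne'
  set a : ℤ → ℝ := fun ℓ => (u ℓ).1 with ha
  have hua : u = fun ℓ => ((a ℓ, 0) : ℝ × ℝ) := funext fun ℓ => Prod.ext rfl (hu.2 ℓ)
  have haper : ∀ ℓ, a (ℓ + (N:ℤ)) = a ℓ := fun ℓ => congrArg Prod.fst (hu.1.1 ℓ)
  have hamean : ∑ ℓ ∈ Finset.Icc (1:ℤ) (N:ℤ), a ℓ = 0 := by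
    have := congrArg Prod.fst (hu.1.2)
    rw [Prod.fst_sum] at this
    exact this
  set p : ℤ → ℝ := fun ℓ => ε⁻¹ * (a ℓ - a (ℓ-1)) with hpdef
  have hpper : ∀ ℓ, p (ℓ + (N:ℤ)) = p ℓ := fun ℓ => by
    show ε⁻¹ * (a (ℓ + (N:ℤ)) - a (ℓ + (N:ℤ) - 1)) = ε⁻¹ * (a ℓ - a (ℓ-1))
    rw [show ℓ + (N:ℤ) - 1 = (ℓ-1) + (N:ℤ) by ring, haper, haper]
  have hpmean : ∑ ℓ ∈ Finset.Icc (1:ℤ) (N:ℤ), p ℓ = 0 := by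
    have e1 : ∑ ℓ ∈ Finset.Icc (1:ℤ) (N:ℤ), p ℓ
        = ε⁻¹ * ((∑ ℓ ∈ Finset.Icc (1:ℤ) (N:ℤ), a ℓ)
            - ∑ ℓ ∈ Finset.Icc (1:ℤ) (N:ℤ), a (ℓ-1)) := by
      rw [mul_sub, Finset.mul_sum, Finset.mul_sum, ← Finset.sum_sub_distrib]
      exact Finset.sum_congr rfl fun ℓ _ => by show ε⁻¹ * (a ℓ - a (ℓ-1)) = _; ring
    rw [e1, per_shift' N (by omega) a haper, hamean]
    ring
  have hane : ∃ ℓ, a ℓ ≠ 0 := by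
    by_contra hc
    push_neg at hc
    exact hune (hua.trans (funext fun ℓ => by rw [hc ℓ]; rfl))
  have hppos : 0 < ∑ ℓ ∈ Finset.Icc (1:ℤ) (N:ℤ), (p ℓ)^2 :=
    diff_not_zero N hN ε hεpos a haper hamean hane
  -- scalarize norms
  have hbd1 : ∀ ℓ, bd ε (fun m => ((a m, 0) : ℝ × ℝ)) ℓ = (p ℓ, 0) := fun ℓ => bd_scalar ε a ℓ
  have hbdfun : bd ε (fun m => ((a m, 0) : ℝ × ℝ)) = fun m => ((p m, 0) : ℝ × ℝ) :=
    funext hbd1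
  have hnrm1 : nrm N ε (bd ε u) ^ 2 = ε * ∑ ℓ ∈ Finset.Icc (1:ℤ) (N:ℤ), (p ℓ)^2 := by
    rw [hua, nrm_sq N ε hεpos.le]
    congr 1
    refine Finset.sum_congr rfl fun ℓ _ => ?_
    rw [hbd1 ℓ]
    norm_num
  have hnrm2 : nrm N ε (bd ε (bd ε u)) ^ 2
      = ε * ∑ ℓ ∈ Finset.Icc (1:ℤ) (N:ℤ), (ε⁻¹ * (p ℓ - p (ℓ-1)))^2 := by
    rw [hua, hbdfun, nrm_sq N ε hεpos.le]
    congr 1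
    refine Finset.sum_congr rfl fun ℓ _ => ?_
    rw [bd_scalar ε p ℓ]
    norm_num
  constructor
  · rw [hnrm1]
    positivity
  · rw [hnrm1, hnrm2]
    have hspec := spectral N hN p hpper hpmean
    have hcos : 2 - 2 * Real.cos (2 * π / (N:ℝ)) = 4 * Real.sin (π * ε)^2 := by
      have h2πN : 2 * π / (N:ℝ) = 2 * (π * ε) := by rw [hε]; ring
      rw [h2πN, Real.cos_two_mul]
      nlinarith [Real.sin_sq_add_cos_sq (π * ε)]
    have key : 4 * Real.sin (π * ε)^2 * ∑ ℓ ∈ Finset.Icc (1:ℤ) (N:ℤ), (p ℓ)^2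
        ≤ ∑ ℓ ∈ Finset.Icc (1:ℤ) (N:ℤ), (p ℓ - p (ℓ-1))^2 := by
      rw [← hcos]
      exact hspec
    have hsum2 : ∑ ℓ ∈ Finset.Icc (1:ℤ) (N:ℤ), (ε⁻¹ * (p ℓ - p (ℓ-1)))^2
        = ε⁻¹^2 * ∑ ℓ ∈ Finset.Icc (1:ℤ) (N:ℤ), (p ℓ - p (ℓ-1))^2 := by
      rw [Finset.mul_sum]
      exact Finset.sum_congr rfl fun ℓ _ => by ring
    rw [hsum2]
    have e1 : (2 * Real.sin (π * ε) / ε) ^ 2 * (ε * ∑ ℓ ∈ Finset.Icc (1:ℤ) (N:ℤ), (p ℓ)^2)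
        = ε⁻¹ * (4 * Real.sin (π * ε)^2 * ∑ ℓ ∈ Finset.Icc (1:ℤ) (N:ℤ), (p ℓ)^2) := by
      field_simp
      ring
    have e2 : ε * (ε⁻¹^2 * ∑ ℓ ∈ Finset.Icc (1:ℤ) (N:ℤ), (p ℓ - p (ℓ-1))^2)
        = ε⁻¹ * ∑ ℓ ∈ Finset.Icc (1:ℤ) (N:ℤ), (p ℓ - p (ℓ-1))^2 := by
      field_simp
    rw [e1, e2]
    exact mul_le_mul_of_nonneg_left key (by positivity)
/-- the optimal test displacement: a discretized sine -/
def a0 (N : ℕ) : ℤ → ℝ := fun ℓ => Real.sin (2 * π * (ℓ:ℝ) / (N:ℝ))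

lemma a0_per (N : ℕ) (hN : 0 < N) : ∀ ℓ, a0 N (ℓ + (N:ℤ)) = a0 N ℓ := by
  intro ℓ
  have hNne : (N:ℝ) ≠ 0 := Nat.cast_ne_zero.2 hN.ne'
  rw [a0, a0, show (2 * π * (((ℓ + (N:ℤ)):ℤ):ℝ) / (N:ℝ)) = 2 * π * (ℓ:ℝ) / (N:ℝ) + 2 * π by
    push_cast; field_simp]
  exact Real.sin_add_two_pi _

lemma a0_mean (N : ℕ) (hN : 4 ≤ N) : ∑ ℓ ∈ Finset.Icc (1:ℤ) (N:ℤ), a0 N ℓ = 0 := by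
  have hN0 : 0 < N := by omega
  have hnd : ¬ ((N:ℤ) ∣ 1) := by
    intro hd
    have := Int.le_of_dvd one_pos hd
    omega
  have hgeom := ce_geom N hN0 1
  rw [if_neg hnd] at hgeom
  have him := congrArg Complex.im hgeom
  rw [Complex.im_sum] at him
  simp only [Complex.zero_im] at him
  rw [← him]
  refine Finset.sum_congr rfl fun ℓ _ => ?_
  rw [show (1 * ℓ) = ℓ by ring, ce, Complex.exp_ofReal_mul_I_im, a0]

lemma a0_eigen (N : ℕ) (hN : 0 < N) (ℓ : ℤ) :
    a0 N (ℓ+1) + a0 N (ℓ-1) = 2 * Real.cos (2 * π / (N:ℝ)) * a0 N ℓ := by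
  have hNne : (N:ℝ) ≠ 0 := Nat.cast_ne_zero.2 hN.ne'
  rw [a0, a0, a0,
    show (2 * π * (((ℓ + 1):ℤ):ℝ) / (N:ℝ)) = 2 * π * (ℓ:ℝ) / (N:ℝ) + 2 * π / (N:ℝ) by
      push_cast; field_simp,
    show (2 * π * (((ℓ - 1):ℤ):ℝ) / (N:ℝ)) = 2 * π * (ℓ:ℝ) / (N:ℝ) - 2 * π / (N:ℝ) by
      push_cast; field_simp,
    Real.sin_add, Real.sin_sub]
  ring

lemma a0_one_pos (N : ℕ) (hN : 4 ≤ N) : 0 < a0 N 1 := by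
  have hNr : (0:ℝ) < (N:ℝ) := by exact_mod_cast (by omega : 0 < N)
  rw [a0]
  apply Real.sin_pos_of_pos_of_lt_pi
  · positivity
  · rw [show (2 * π * ((1:ℤ):ℝ) / (N:ℝ)) = 2 * π / (N:ℝ) by push_cast; ring]
    rw [div_lt_iff₀ hNr]
    have hN4r : (4:ℝ) ≤ (N:ℝ) := by exact_mod_cast hN
    nlinarith [Real.pi_pos]

set_option maxHeartbeats 1000000 in
lemma ratio_attained (N : ℕ) (hN : 4 ≤ N) (ε : ℝ) (hε : ε = (N : ℝ)⁻¹) :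
    ∃ u : ℤ → ℝ × ℝ, IsDisp1D N u ∧ u ≠ 0 ∧
      0 < (nrm N ε (bd ε u)) ^ 2 ∧
      (nrm N ε (bd ε (bd ε u))) ^ 2
        = (2 * Real.sin (π * ε) / ε) ^ 2 * (nrm N ε (bd ε u)) ^ 2 := by
  have hN0 : 0 < N := by omega
  have hNr : (0:ℝ) < (N:ℝ) := by exact_mod_cast hN0
  have hN4r : (4:ℝ) ≤ (N:ℝ) := by exact_mod_cast hN
  have hNne : (N:ℝ) ≠ 0 := hNr.ne'
  have hεpos : 0 < ε := by rw [hε]; positivity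
  have hεne : ε ≠ 0 := hεpos.ne'
  set c : ℝ := Real.cos (2 * π / (N:ℝ)) with hc
  set p : ℤ → ℝ := fun ℓ => ε⁻¹ * (a0 N ℓ - a0 N (ℓ-1)) with hpdef
  have hpper : ∀ ℓ, p (ℓ + (N:ℤ)) = p ℓ := fun ℓ => by
    show ε⁻¹ * (a0 N (ℓ + (N:ℤ)) - a0 N (ℓ + (N:ℤ) - 1)) = ε⁻¹ * (a0 N ℓ - a0 N (ℓ-1))
    rw [show ℓ + (N:ℤ) - 1 = (ℓ-1) + (N:ℤ) by ring, a0_per N hN0, a0_per N hN0]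
  have hpeig : ∀ ℓ, p (ℓ+1) + p (ℓ-1) = 2 * c * p ℓ := by
    intro ℓ
    have h1 := a0_eigen N hN0 ℓ
    have h2 : a0 N ℓ + a0 N (ℓ-2) = 2 * c * a0 N (ℓ-1) := by
      have := a0_eigen N hN0 (ℓ-1)
      rw [show ℓ-1+1 = ℓ by ring, show ℓ-1-1 = ℓ-2 by ring] at this
      exact this
    show ε⁻¹ * (a0 N (ℓ+1) - a0 N (ℓ+1-1)) + ε⁻¹ * (a0 N (ℓ-1) - a0 N (ℓ-1-1))
        = 2 * c * (ε⁻¹ * (a0 N ℓ - a0 N (ℓ-1)))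
    rw [show ℓ+1-1 = ℓ by ring, show ℓ-1-1 = ℓ-2 by ring]
    linear_combination ε⁻¹ * h1 - ε⁻¹ * h2
  have hpN : 0 < p (N:ℤ) := by
    have haN : a0 N (N:ℤ) = 0 := by
      rw [a0, show (2 * π * (((N:ℤ)):ℝ) / (N:ℝ)) = 2 * π by push_cast; field_simp]
      exact Real.sin_two_pi
    have haN1 : a0 N ((N:ℤ)-1) = - Real.sin (2 * π / (N:ℝ)) := by
      rw [a0, show (2 * π * ((((N:ℤ)-1):ℤ):ℝ) / (N:ℝ)) = 2 * π - 2 * π / (N:ℝ) by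
        push_cast; field_simp]
      exact Real.sin_two_pi_sub _
    have hsinpos : 0 < Real.sin (2 * π / (N:ℝ)) := by
      apply Real.sin_pos_of_pos_of_lt_pi
      · positivity
      · rw [div_lt_iff₀ hNr]
        nlinarith [Real.pi_pos]
    show 0 < ε⁻¹ * (a0 N (N:ℤ) - a0 N ((N:ℤ)-1))
    rw [haN, haN1]
    have : 0 < ε⁻¹ := by positivity
    nlinarith
  have hppos : 0 < ∑ ℓ ∈ Finset.Icc (1:ℤ) (N:ℤ), (p ℓ)^2 :=
    sum_sq_pos N (by omega) p (N:ℤ) (by rw [Finset.mem_Icc]; omega) hpN.ne'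
  have hbd1 : ∀ ℓ, bd ε (fun m => ((a0 N m, 0) : ℝ × ℝ)) ℓ = (p ℓ, 0) := fun ℓ =>
    bd_scalar ε (a0 N) ℓ
  have hbdfun : bd ε (fun m => ((a0 N m, 0) : ℝ × ℝ)) = fun m => ((p m, 0) : ℝ × ℝ) :=
    funext hbd1
  have hnrm1 : nrm N ε (bd ε (fun ℓ => ((a0 N ℓ, 0) : ℝ × ℝ))) ^ 2
      = ε * ∑ ℓ ∈ Finset.Icc (1:ℤ) (N:ℤ), (p ℓ)^2 := by
    rw [nrm_sq N ε hεpos.le]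
    congr 1
    refine Finset.sum_congr rfl fun ℓ _ => ?_
    rw [hbd1 ℓ]
    norm_num
  have hnrm2 : nrm N ε (bd ε (bd ε (fun ℓ => ((a0 N ℓ, 0) : ℝ × ℝ)))) ^ 2
      = ε * ∑ ℓ ∈ Finset.Icc (1:ℤ) (N:ℤ), (ε⁻¹ * (p ℓ - p (ℓ-1)))^2 := by
    rw [hbdfun, nrm_sq N ε hεpos.le]
    congr 1
    refine Finset.sum_congr rfl fun ℓ _ => ?_
    rw [bd_scalar ε p ℓ]
    norm_num
  refine ⟨fun ℓ => (a0 N ℓ, 0), ⟨⟨fun ℓ => Prod.ext (a0_per N hN0 ℓ) rfl, ?_⟩,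
    fun ℓ => rfl⟩, ?_, ?_, ?_⟩
  · refine Prod.ext ?_ ?_
    · rw [Prod.fst_sum]
      exact a0_mean N hN
    · rw [Prod.snd_sum]
      simp
  · intro h
    have h1 := congrFun h 1
    rw [show ((0 : ℤ → ℝ × ℝ) 1) = ((0,0) : ℝ × ℝ) from rfl] at h1
    have hz : a0 N 1 = 0 := congrArg Prod.fst h1
    have hpos := a0_one_pos N hN
    linarith
  · rw [hnrm1]
    exact mul_pos hεpos hppos
  · rw [hnrm1, hnrm2]
    have heq := eigen_sum N (by omega) p hpper c hpeig
    have hsum2 : ∑ ℓ ∈ Finset.Icc (1:ℤ) (N:ℤ), (ε⁻¹ * (p ℓ - p (ℓ-1)))^2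
        = ε⁻¹^2 * ∑ ℓ ∈ Finset.Icc (1:ℤ) (N:ℤ), (p ℓ - p (ℓ-1))^2 := by
      rw [Finset.mul_sum]
      exact Finset.sum_congr rfl fun ℓ _ => by ring
    have hcos : 2 - 2 * c = 4 * Real.sin (π * ε)^2 := by
      rw [hc, show 2 * π / (N:ℝ) = 2 * (π * ε) by rw [hε]; ring, Real.cos_two_mul]
      nlinarith [Real.sin_sq_add_cos_sq (π * ε)]
    rw [hsum2, heq, hcos]
    field_simp
    ring

theorem stmt_1 (N : ℕ) (hN : 4 ≤ N) (ε : ℝ) (hε : ε = (N : ℝ)⁻¹)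
    (φ : ℝ → ℝ) (hφ : ContDiffOn ℝ 2 φ (Set.Ioi 0)) (F : ℝ) (hF : 0 < F) :
    (∀ u : ℤ → ℝ × ℝ, IsDisp1D N u →
      d2E (Ea N ε φ) (yLin ε F) u u =
        (deriv (deriv φ) F + 4 * deriv (deriv φ) (2 * F)) * (nrm N ε (bd ε u)) ^ 2
          - ε ^ 2 * deriv (deriv φ) (2 * F) * (nrm N ε (bd ε (bd ε u))) ^ 2) ∧
    (deriv (deriv φ) (2 * F) ≤ 0 →
      IsGLB {r : ℝ | ∃ u : ℤ → ℝ × ℝ, IsDisp1D N u ∧ u ≠ 0 ∧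
          r = d2E (Ea N ε φ) (yLin ε F) u u / (nrm N ε (bd ε u)) ^ 2}
        (deriv (deriv φ) F + 4 * deriv (deriv φ) (2 * F)
          - ε ^ 2 * deriv (deriv φ) (2 * F) * (2 * Real.sin (π * ε) / ε) ^ 2)) ∧
    IsGLB {r : ℝ | ∃ u : ℤ → ℝ × ℝ, IsDisp1D N u ∧ u ≠ 0 ∧
        r = (nrm N ε (bd ε (bd ε u))) ^ 2 / (nrm N ε (bd ε u)) ^ 2}
      ((2 * Real.sin (π * ε) / ε) ^ 2) := by
  obtain ⟨u₀, hu₀, hu₀ne, hu₀pos, hu₀eq⟩ := ratio_attained N hN ε hε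
  refine ⟨fun u hu => part1_formula N hN ε hε φ hφ F hF u hu, ?_, ?_⟩
  · -- part 2
    intro hd2
    apply IsLeast.isGLB
    constructor
    · refine ⟨u₀, hu₀, hu₀ne, ?_⟩
      rw [part1_formula N hN ε hε φ hφ F hF u₀ hu₀, hu₀eq, eq_div_iff hu₀pos.ne']
      ring
    · intro r hr
      obtain ⟨u, hu, hune, rfl⟩ := hr
      obtain ⟨hposA, hineq⟩ := ratio_bound N hN ε hε u hu hune
      rw [part1_formula N hN ε hε φ hφ F hF u hu, le_div_iff₀ hposA]
      have hKpos : (0:ℝ) ≤ ε^2 * (-(deriv (deriv φ) (2*F))) :=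
        mul_nonneg (sq_nonneg ε) (by linarith)
      have h := mul_le_mul_of_nonneg_left hineq hKpos
      nlinarith [h]
  · -- part 3
    apply IsLeast.isGLB
    constructor
    · refine ⟨u₀, hu₀, hu₀ne, ?_⟩
      rw [hu₀eq, mul_div_cancel_right₀ _ hu₀pos.ne']
    · intro r hr
      obtain ⟨u, hu, hune, rfl⟩ := hr
      obtain ⟨hposA, hineq⟩ := ratio_bound N hN ε hε u hu hune
      rw [le_div_iff₀ hposA]
      exact hineq
end
end

section
/- Let y_F be the linear chain with nearest-neighbor spacing Fε. Then the infimum over all unconstrained displacements u ∈ 𝒰 \ {0} of δ²E^CB(y_F)[u,u]/‖u'‖²_{ℓ²_ε} equals min{ φ''(F) + 4 φ''(2F), (φ'(F) + 2 φ'(2F))/F }. -/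
noncomputable section

open Real Finset

namespace CBaux

/-- the length of (F+x a, x b) -/
def mfun (F a b x : ℝ) : ℝ := Real.sqrt ((F + x * a) ^ 2 + (x * b) ^ 2)

def Qfun (φ : ℝ → ℝ) (F a b x : ℝ) : ℝ := φ (mfun F a b x) + φ (2 * mfun F a b x)

def Dfun (φ : ℝ → ℝ) (F a b x : ℝ) : ℝ :=
  (deriv φ (mfun F a b x) + 2 * deriv φ (2 * mfun F a b x)) *
    (((F + x * a) * a + x * b ^ 2) / mfun F a b x)

lemma mfun_pos {F a b x : ℝ} (hp : 0 < (F + x * a) ^ 2 + (x * b) ^ 2) :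
    0 < mfun F a b x := Real.sqrt_pos.2 hp

lemma mfun_zero {F a b : ℝ} (hF : 0 < F) : mfun F a b 0 = F := by
  simp [mfun, Real.sqrt_sq hF.le]

lemma hasDerivAt_mfun {F a b x : ℝ} (hp : 0 < (F + x * a) ^ 2 + (x * b) ^ 2) :
    HasDerivAt (mfun F a b) (((F + x * a) * a + x * b ^ 2) / mfun F a b x) x := by
  have hq : HasDerivAt (fun x : ℝ => (F + x * a) ^ 2 + (x * b) ^ 2)
      (2 * (F + x * a) * a + 2 * (x * b) * b) x := by
    have h1 : HasDerivAt (fun x : ℝ => F + x * a) a x := by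
      simpa using ((hasDerivAt_id x).mul_const a).const_add F
    have h2 : HasDerivAt (fun x : ℝ => x * b) b x := by
      simpa using (hasDerivAt_id x).mul_const b
    have := (h1.pow 2).add (h2.pow 2)
    refine this.congr_deriv ?_
    ring
  have hm := (Real.hasDerivAt_sqrt hp.ne').comp x hq
  have hmx : mfun F a b x ≠ 0 := (mfun_pos hp).ne'
  refine hm.congr_deriv ?_
  unfold mfun at hmx ⊢
  field_simp

lemma hasDerivAt_Qfun {φ : ℝ → ℝ} (hφ : ContDiffOn ℝ 2 φ (Set.Ioi 0))
    {F a b x : ℝ} (hp : 0 < (F + x * a) ^ 2 + (x * b) ^ 2) :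
    HasDerivAt (Qfun φ F a b) (Dfun φ F a b x) x := by
  have hm := hasDerivAt_mfun (F := F) (a := a) (b := b) hp
  have hmpos := mfun_pos (F := F) (a := a) (b := b) hp
  have hder : ∀ r : ℝ, 0 < r → HasDerivAt φ (deriv φ r) r := by
    intro r hr
    exact ((hφ.contDiffAt (isOpen_Ioi.mem_nhds hr)).differentiableAt
      (by norm_num)).hasDerivAt
  have h1 := (hder _ hmpos).comp x hm
  have h2 := (hder _ (by positivity : (0:ℝ) < 2 * mfun F a b x)).comp x (hm.const_mul 2)
  have := h1.add h2
  refine this.congr_deriv ?_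
  simp only [Dfun]
  ring

lemma hasDerivAt_deriv_phi {φ : ℝ → ℝ} (hφ : ContDiffOn ℝ 2 φ (Set.Ioi 0))
    {r : ℝ} (hr : 0 < r) : HasDerivAt (deriv φ) (deriv (deriv φ) r) r := by
  have h1 : ContDiffOn ℝ 1 (deriv φ) (Set.Ioi 0) :=
    hφ.deriv_of_isOpen isOpen_Ioi (by norm_num)
  exact ((h1.differentiableOn (by norm_num)).differentiableAt
    (isOpen_Ioi.mem_nhds hr)).hasDerivAt

lemma hasDerivAt_Dfun {φ : ℝ → ℝ} (hφ : ContDiffOn ℝ 2 φ (Set.Ioi 0))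
    {F : ℝ} (hF : 0 < F) (a b : ℝ) :
    HasDerivAt (Dfun φ F a b)
      ((deriv (deriv φ) F + 4 * deriv (deriv φ) (2 * F)) * a ^ 2 +
        ((deriv φ F + 2 * deriv φ (2 * F)) / F) * b ^ 2) 0 := by
  have hp0 : 0 < (F + 0 * a) ^ 2 + (0 * b) ^ 2 := by simpa using pow_pos hF 2
  have hm0 : mfun F a b 0 = F := mfun_zero hF
  have hma : HasDerivAt (mfun F a b) a 0 := by
    have := hasDerivAt_mfun (F := F) (a := a) (b := b) hp0
    rw [hm0] at this
    convert this using 1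
    field_simp
    ring
  -- first factor
  have h1 : HasDerivAt (fun x => deriv φ (mfun F a b x)) (deriv (deriv φ) F * a) 0 := by
    have hg := hasDerivAt_deriv_phi hφ hF
    rw [← hm0] at hg
    have := hg.comp 0 hma
    rw [hm0] at this
    exact this
  have h2 : HasDerivAt (fun x => 2 * deriv φ (2 * mfun F a b x))
      (4 * deriv (deriv φ) (2 * F) * a) 0 := by
    have hg := hasDerivAt_deriv_phi hφ (by positivity : (0:ℝ) < 2 * F)
    have h2m : HasDerivAt (fun x => 2 * mfun F a b x) (2 * a) 0 := hma.const_mul 2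
    rw [show (2 * F) = 2 * mfun F a b 0 by rw [hm0]] at hg
    have := (hg.comp 0 h2m).const_mul 2
    rw [hm0] at this
    refine this.congr_deriv ?_
    ring
  -- second factor
  have hg : HasDerivAt (fun x => ((F + x * a) * a + x * b ^ 2) / mfun F a b x)
      (b ^ 2 / F) 0 := by
    have hn : HasDerivAt (fun x : ℝ => (F + x * a) * a + x * b ^ 2) (a * a + b ^ 2) 0 := by
      have ha : HasDerivAt (fun x : ℝ => (F + x * a) * a) (a * a) 0 := by
        simpa using (((hasDerivAt_id (0:ℝ)).mul_const a).const_add F).mul_const a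
      have hb : HasDerivAt (fun x : ℝ => x * b ^ 2) (b ^ 2) 0 := by
        simpa using (hasDerivAt_id (0:ℝ)).mul_const (b ^ 2)
      exact ha.add hb
    have := hn.div hma (by rw [hm0]; exact hF.ne')
    refine this.congr_deriv ?_
    rw [hm0]
    field_simp
    ring
  have hD := (h1.fun_add h2).fun_mul hg
  have hDv : (fun x => (deriv φ (mfun F a b x) + 2 * deriv φ (2 * mfun F a b x)) *
      (((F + x * a) * a + x * b ^ 2) / mfun F a b x)) = Dfun φ F a b := rfl
  rw [hDv] at hD
  refine hD.congr_deriv ?_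
  rw [hm0]
  have hF' : F ≠ 0 := hF.ne'
  field_simp
  ring


lemma bd_shift {ε F : ℝ} (hε : ε ≠ 0) (u : ℤ → ℝ × ℝ) (t s : ℝ) (ℓ : ℤ) :
    bd ε (fun j => yLin ε F j + t • u j + s • u j) ℓ =
      (F + (t + s) * (bd ε u ℓ).1, (t + s) * (bd ε u ℓ).2) := by
  have : (F * ε * ℓ - F * ε * (ℓ - 1 : ℤ)) = F * ε := by
    push_cast; ring
  simp only [bd, yLin, Prod.smul_mk, Prod.mk_add_mk, Prod.mk_sub_mk, smul_eq_mul]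
  apply Prod.ext <;>
    simp only [Prod.smul_fst, Prod.smul_snd, Prod.fst_add, Prod.snd_add, Prod.fst_sub,
      Prod.snd_sub, smul_eq_mul] <;>
    field_simp <;> push_cast <;> ring

lemma enorm2_eq {F x a b : ℝ} : enorm2 (F + x * a, x * b) = mfun F a b x := rfl

lemma ECB_eq (N : ℕ) {ε : ℝ} (hε : ε ≠ 0) (φ : ℝ → ℝ) (F : ℝ) (u : ℤ → ℝ × ℝ)
    (t s : ℝ) :
    ECB N ε φ (fun j => yLin ε F j + t • u j + s • u j) =
      ε * ∑ ℓ ∈ Finset.Icc (1 : ℤ) (N : ℤ),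
        Qfun φ F (bd ε u ℓ).1 (bd ε u ℓ).2 (t + s) := by
  unfold ECB
  congr 1
  apply Finset.sum_congr rfl
  intro ℓ _
  rw [bd_shift hε u t s ℓ, enorm2_eq]
  rfl

lemma d2E_formula (N : ℕ) {ε : ℝ} (hε : 0 < ε) {φ : ℝ → ℝ}
    (hφ : ContDiffOn ℝ 2 φ (Set.Ioi 0)) {F : ℝ} (hF : 0 < F) (u : ℤ → ℝ × ℝ) :
    d2E (ECB N ε φ) (yLin ε F) u u =
      ε * ∑ ℓ ∈ Finset.Icc (1 : ℤ) (N : ℤ),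
        ((deriv (deriv φ) F + 4 * deriv (deriv φ) (2 * F)) * (bd ε u ℓ).1 ^ 2 +
          ((deriv φ F + 2 * deriv φ (2 * F)) / F) * (bd ε u ℓ).2 ^ 2) := by
  set a : ℤ → ℝ := fun ℓ => (bd ε u ℓ).1 with ha
  set b : ℤ → ℝ := fun ℓ => (bd ε u ℓ).2 with hb
  -- eventual positivity
  have hev : ∀ᶠ x : ℝ in nhds 0, ∀ ℓ ∈ Finset.Icc (1 : ℤ) (N : ℤ),
      0 < (F + x * a ℓ) ^ 2 + (x * b ℓ) ^ 2 := by
    rw [Filter.eventually_all_finset]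
    intro ℓ _
    have hc : Continuous (fun x : ℝ => (F + x * a ℓ) ^ 2 + (x * b ℓ) ^ 2) := by
      continuity
    have h0 : (0:ℝ) < (F + 0 * a ℓ) ^ 2 + (0 * b ℓ) ^ 2 := by simpa using pow_pos hF 2
    exact (hc.tendsto 0).eventually (eventually_gt_nhds h0)
  -- the inner derivative, on the eventual set
  have hinner : ∀ x : ℝ, (∀ ℓ ∈ Finset.Icc (1 : ℤ) (N : ℤ),
      0 < (F + x * a ℓ) ^ 2 + (x * b ℓ) ^ 2) →
      deriv (fun t : ℝ => ECB N ε φ (fun j => yLin ε F j + t • u j + x • u j)) 0 =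
        ε * ∑ ℓ ∈ Finset.Icc (1 : ℤ) (N : ℤ), Dfun φ F (a ℓ) (b ℓ) x := by
    intro x hx
    have heq : (fun t : ℝ => ECB N ε φ (fun j => yLin ε F j + t • u j + x • u j)) =
        fun t : ℝ => ε * ∑ ℓ ∈ Finset.Icc (1 : ℤ) (N : ℤ), Qfun φ F (a ℓ) (b ℓ) (t + x) := by
      funext t
      exact ECB_eq N hε.ne' φ F u t x
    rw [heq]
    have hsum : HasDerivAt (fun t : ℝ => ∑ ℓ ∈ Finset.Icc (1 : ℤ) (N : ℤ),
        Qfun φ F (a ℓ) (b ℓ) (t + x))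
        (∑ ℓ ∈ Finset.Icc (1 : ℤ) (N : ℤ), Dfun φ F (a ℓ) (b ℓ) x) 0 := by
      apply HasDerivAt.fun_sum
      intro ℓ hℓ
      have hQ := hasDerivAt_Qfun hφ (hx ℓ hℓ)
      have hid : HasDerivAt (fun t : ℝ => t + x) 1 0 := by
        simpa using (hasDerivAt_id (0:ℝ)).add_const x
      have hQ' : HasDerivAt (Qfun φ F (a ℓ) (b ℓ)) (Dfun φ F (a ℓ) (b ℓ) x) ((0:ℝ) + x) := by
        simpa using hQ
      have := hQ'.comp 0 hid
      exact this.congr_deriv (mul_one _)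
    exact (hsum.const_mul ε).deriv
  -- outer derivative
  have houter : (fun x : ℝ =>
      deriv (fun t : ℝ => ECB N ε φ (fun j => yLin ε F j + t • u j + x • u j)) 0) =ᶠ[nhds 0]
      fun x : ℝ => ε * ∑ ℓ ∈ Finset.Icc (1 : ℤ) (N : ℤ), Dfun φ F (a ℓ) (b ℓ) x :=
    hev.mono fun x hx => hinner x hx
  unfold d2E
  rw [houter.deriv_eq]
  have hsum2 : HasDerivAt (fun x : ℝ =>
      ∑ ℓ ∈ Finset.Icc (1 : ℤ) (N : ℤ), Dfun φ F (a ℓ) (b ℓ) x)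
      (∑ ℓ ∈ Finset.Icc (1 : ℤ) (N : ℤ),
        ((deriv (deriv φ) F + 4 * deriv (deriv φ) (2 * F)) * (a ℓ) ^ 2 +
          ((deriv φ F + 2 * deriv φ (2 * F)) / F) * (b ℓ) ^ 2)) 0 := by
    apply HasDerivAt.fun_sum
    intro ℓ _
    exact hasDerivAt_Dfun hφ hF (a ℓ) (b ℓ)
  exact (hsum2.const_mul ε).deriv


lemma nrm_sq (N : ℕ) {ε : ℝ} (hε : 0 ≤ ε) (v : ℤ → ℝ × ℝ) :
    (nrm N ε v) ^ 2 = ε * ∑ ℓ ∈ Finset.Icc (1 : ℤ) (N : ℤ), ((v ℓ).1 ^ 2 + (v ℓ).2 ^ 2) := by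
  unfold nrm
  rw [Real.sq_sqrt]
  · congr 1
    apply Finset.sum_congr rfl
    intro ℓ _
    unfold enorm2
    rw [Real.sq_sqrt (by positivity)]
  · apply mul_nonneg hε
    apply Finset.sum_nonneg
    intro ℓ _
    positivity

lemma disp_eq_zero {N : ℕ} (hN : 0 < N) {u : ℤ → ℝ × ℝ} (hu : IsDisp N u)
    (h : ∀ ℓ ∈ Finset.Icc (1 : ℤ) (N : ℤ), u ℓ - u (ℓ - 1) = 0) : u = 0 := by
  obtain ⟨hper, hsum⟩ := hu
  have hstep : ∀ ℓ ∈ Finset.Icc (1 : ℤ) (N : ℤ), u ℓ = u (ℓ - 1) := by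
    intro ℓ hℓ
    have := h ℓ hℓ
    linear_combination (norm := module) this
  have hnat : ∀ k : ℕ, k ≤ N → u k = u 0 := by
    intro k
    induction k with
    | zero => intro _; rfl
    | succ n ih =>
      intro hn
      have h1 : ((n:ℤ) + 1) ∈ Finset.Icc (1 : ℤ) (N : ℤ) := by
        simp only [Finset.mem_Icc]
        constructor <;> [omega; exact_mod_cast hn]
      have := hstep _ h1
      push_cast
      rw [this]
      simpa using ih (by omega)
  have hu0 : u 0 = 0 := by
    have hsum' : ∑ ℓ ∈ Finset.Icc (1 : ℤ) (N : ℤ), u ℓ =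
        ∑ _ℓ ∈ Finset.Icc (1 : ℤ) (N : ℤ), u 0 := by
      apply Finset.sum_congr rfl
      intro ℓ hℓ
      simp only [Finset.mem_Icc] at hℓ
      have hk : ℓ = ((ℓ.toNat : ℕ) : ℤ) := by omega
      rw [hk, hnat ℓ.toNat (by omega)]
    rw [hsum'] at hsum
    simp only [Finset.sum_const] at hsum
    have hcard : (Finset.Icc (1 : ℤ) (N : ℤ)).card = N := by
      rw [Int.card_Icc]
      omega
    rw [hcard] at hsum
    rcases smul_eq_zero.1 hsum with h' | h'
    · exact absurd h' hN.ne'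
    · exact h'
  have hmul : ∀ k : ℤ, ∀ x : ℤ, u (x + N * k) = u x := by
    intro k
    induction k using Int.induction_on with
    | zero => intro x; simp
    | succ n ih =>
      intro x
      have : x + (N:ℤ) * ((n:ℤ) + 1) = (x + N * n) + N := by ring
      rw [this, hper, ih]
    | pred n ih =>
      intro x
      have : x + (N:ℤ) * (-(n:ℤ) - 1) + N = x + N * (-(n:ℤ)) := by ring
      rw [← ih x, ← this, hper]
  funext ℓ
  have hdecomp : ℓ = ℓ % (N:ℤ) + (N:ℤ) * (ℓ / (N:ℤ)) := by
    rw [Int.emod_add_mul_ediv]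
  have : u ℓ = u (ℓ % (N:ℤ)) := by conv_lhs => rw [hdecomp, hmul]
  rw [this]
  have hr : ℓ % (N:ℤ) = (((ℓ % (N:ℤ)).toNat : ℕ) : ℤ) := by
    have := Int.emod_nonneg ℓ (by exact_mod_cast hN.ne' : (N:ℤ) ≠ 0)
    omega
  rw [hr, hnat _ (by
    have h1 := Int.emod_lt_of_pos ℓ (by exact_mod_cast hN : (0:ℤ) < N)
    have h2 := Int.emod_nonneg ℓ (by exact_mod_cast hN.ne' : (N:ℤ) ≠ 0)
    omega)]
  rw [hu0]
  rfl

lemma exists_bd_ne {N : ℕ} (hN : 0 < N) {ε : ℝ} (hε : ε ≠ 0) {u : ℤ → ℝ × ℝ}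
    (hu : IsDisp N u) (hu0 : u ≠ 0) :
    ∃ ℓ ∈ Finset.Icc (1 : ℤ) (N : ℤ), bd ε u ℓ ≠ 0 := by
  by_contra hc
  push_neg at hc
  apply hu0
  apply disp_eq_zero hN hu
  intro ℓ hℓ
  have := hc ℓ hℓ
  unfold bd at this
  rcases smul_eq_zero.1 this with h' | h'
  · exact absurd h' (inv_ne_zero hε)
  · exact h'

lemma sum_sq_pos {N : ℕ} (hN : 0 < N) {ε : ℝ} (hε : ε ≠ 0) {u : ℤ → ℝ × ℝ}
    (hu : IsDisp N u) (hu0 : u ≠ 0) :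
    0 < ∑ ℓ ∈ Finset.Icc (1 : ℤ) (N : ℤ), ((bd ε u ℓ).1 ^ 2 + (bd ε u ℓ).2 ^ 2) := by
  obtain ⟨ℓ0, hℓ0, hne⟩ := exists_bd_ne hN hε hu hu0
  apply Finset.sum_pos' (fun ℓ _ => by positivity)
  refine ⟨ℓ0, hℓ0, ?_⟩
  have : (bd ε u ℓ0).1 ≠ 0 ∨ (bd ε u ℓ0).2 ≠ 0 := by
    by_contra hcc
    push_neg at hcc
    exact hne (Prod.ext hcc.1 hcc.2)
  rcases this with h' | h'
  · have : 0 < (bd ε u ℓ0).1 ^ 2 := by positivity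
    nlinarith [sq_nonneg (bd ε u ℓ0).2]
  · have : 0 < (bd ε u ℓ0).2 ^ 2 := by positivity
    nlinarith [sq_nonneg (bd ε u ℓ0).1]

/-- the test displacement pattern -/
def up (N : ℕ) (v : ℝ × ℝ) : ℤ → ℝ × ℝ := fun ℓ =>
  if ℓ % (N : ℤ) = 1 then v else if ℓ % (N : ℤ) = 2 then -v else 0

lemma up_isDisp {N : ℕ} (hN : 4 ≤ N) (v : ℝ × ℝ) : IsDisp N (up N v) := by
  constructor
  · intro ℓ
    have : (ℓ + (N:ℤ)) % (N:ℤ) = ℓ % (N:ℤ) := by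
      simpa using Int.add_mul_emod_self_left (a := ℓ) (b := (N:ℤ)) (c := 1)
    simp only [up, this]
  · have hru : ∀ ℓ ∈ Finset.Icc (1 : ℤ) (N : ℤ), up N v ℓ =
        (if ℓ = 1 then v else 0) + (if ℓ = 2 then -v else 0) := by
      intro ℓ hℓ
      simp only [Finset.mem_Icc] at hℓ
      by_cases e1 : ℓ = 1
      · subst e1
        have h1 : (1:ℤ) % (N:ℤ) = 1 :=
          Int.emod_eq_of_lt (by norm_num) (by exact_mod_cast by omega)
        simp [up, h1]
      · by_cases e2 : ℓ = 2
        · subst e2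
          have h2 : (2:ℤ) % (N:ℤ) = 2 :=
            Int.emod_eq_of_lt (by norm_num) (by exact_mod_cast by omega)
          have h2' : (2:ℤ) % (N:ℤ) ≠ 1 := by rw [h2]; norm_num
          simp [up, h2, h2']
        · have hem : ℓ % (N:ℤ) = 0 ∨ ℓ % (N:ℤ) = ℓ := by
            by_cases eN : ℓ = (N:ℤ)
            · left; rw [eN]; exact Int.emod_self
            · right; exact Int.emod_eq_of_lt (by omega) (by omega)
          have h1 : ℓ % (N:ℤ) ≠ 1 := by rcases hem with h|h <;> rw [h] <;> omega
          have h2 : ℓ % (N:ℤ) ≠ 2 := by rcases hem with h|h <;> rw [h] <;> omega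
          simp [up, h1, h2, e1, e2]
    rw [Finset.sum_congr rfl hru, Finset.sum_add_distrib]
    rw [Finset.sum_ite_eq' (Finset.Icc (1:ℤ) (N:ℤ)) 1 (fun _ => v),
      Finset.sum_ite_eq' (Finset.Icc (1:ℤ) (N:ℤ)) 2 (fun _ => -v)]
    have m1 : (1:ℤ) ∈ Finset.Icc (1:ℤ) (N:ℤ) := by simp only [Finset.mem_Icc]; omega
    have m2 : (2:ℤ) ∈ Finset.Icc (1:ℤ) (N:ℤ) := by simp only [Finset.mem_Icc]; omega
    rw [if_pos m1, if_pos m2]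
    simp

lemma up_zero {N : ℕ} (hN : 4 ≤ N) (v : ℝ × ℝ) : up N v 0 = 0 := by
  have h0 : (0:ℤ) % (N:ℤ) = 0 := Int.zero_emod _
  simp [up, h0]

lemma up_one {N : ℕ} (hN : 4 ≤ N) (v : ℝ × ℝ) : up N v 1 = v := by
  have h1 : (1:ℤ) % (N:ℤ) = 1 :=
    Int.emod_eq_of_lt (by norm_num) (by exact_mod_cast by omega)
  simp [up, h1]

lemma up_ne_zero {N : ℕ} (hN : 4 ≤ N) {v : ℝ × ℝ} (hv : v ≠ 0) : up N v ≠ 0 := by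
  intro h
  apply hv
  have := congrFun h 1
  rwa [up_one hN] at this

lemma quotient_eq (N : ℕ) {ε : ℝ} (hε : 0 < ε) {φ : ℝ → ℝ}
    (hφ : ContDiffOn ℝ 2 φ (Set.Ioi 0)) {F : ℝ} (hF : 0 < F) {u : ℤ → ℝ × ℝ}
    (hN : 0 < N) (hu : IsDisp N u) (hu0 : u ≠ 0) (c : ℝ)
    (hc : ∀ ℓ ∈ Finset.Icc (1 : ℤ) (N : ℤ),
      (deriv (deriv φ) F + 4 * deriv (deriv φ) (2 * F)) * (bd ε u ℓ).1 ^ 2 +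
        ((deriv φ F + 2 * deriv φ (2 * F)) / F) * (bd ε u ℓ).2 ^ 2 =
        c * ((bd ε u ℓ).1 ^ 2 + (bd ε u ℓ).2 ^ 2)) :
    d2E (ECB N ε φ) (yLin ε F) u u / (nrm N ε (bd ε u)) ^ 2 = c := by
  rw [d2E_formula N hε hφ hF u, nrm_sq N hε.le (bd ε u)]
  rw [Finset.sum_congr rfl hc, ← Finset.mul_sum]
  have hS := sum_sq_pos hN hε.ne' hu hu0
  rw [show ε * (c * ∑ ℓ ∈ Finset.Icc (1 : ℤ) (N : ℤ),
      ((bd ε u ℓ).1 ^ 2 + (bd ε u ℓ).2 ^ 2)) =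
    c * (ε * ∑ ℓ ∈ Finset.Icc (1 : ℤ) (N : ℤ),
      ((bd ε u ℓ).1 ^ 2 + (bd ε u ℓ).2 ^ 2)) by ring]
  exact mul_div_cancel_right₀ c (by positivity)

theorem stmt_2' (N : ℕ) (hN : 4 ≤ N) (ε : ℝ) (hε : ε = (N : ℝ)⁻¹)
    (φ : ℝ → ℝ) (hφ : ContDiffOn ℝ 2 φ (Set.Ioi 0)) (F : ℝ) (hF : 0 < F) :
    IsGLB {r : ℝ | ∃ u : ℤ → ℝ × ℝ, IsDisp N u ∧ u ≠ 0 ∧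
        r = d2E (ECB N ε φ) (yLin ε F) u u / (nrm N ε (bd ε u)) ^ 2}
      (min (deriv (deriv φ) F + 4 * deriv (deriv φ) (2 * F))
        ((deriv φ F + 2 * deriv φ (2 * F)) / F)) := by
  set A := deriv (deriv φ) F + 4 * deriv (deriv φ) (2 * F) with hA
  set Bc := (deriv φ F + 2 * deriv φ (2 * F)) / F with hBc
  have hNpos : 0 < N := by omega
  have hεpos : 0 < ε := by
    rw [hε]
    have : (0:ℝ) < (N:ℝ) := by exact_mod_cast hNpos
    positivity
  set S := {r : ℝ | ∃ u : ℤ → ℝ × ℝ, IsDisp N u ∧ u ≠ 0 ∧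
      r = d2E (ECB N ε φ) (yLin ε F) u u / (nrm N ε (bd ε u)) ^ 2} with hSdef
  -- second components of bd of "horizontal" pattern vanish
  have hbd2 : ∀ (u : ℤ → ℝ × ℝ), (∀ j, (u j).2 = 0) → ∀ ℓ, (bd ε u ℓ).2 = 0 := by
    intro u hu ℓ
    simp [bd, hu]
  have hbd1 : ∀ (u : ℤ → ℝ × ℝ), (∀ j, (u j).1 = 0) → ∀ ℓ, (bd ε u ℓ).1 = 0 := by
    intro u hu ℓ
    simp [bd, hu]
  have memA : A ∈ S := by
    refine ⟨up N (1, 0), up_isDisp hN _, up_ne_zero hN (by simp), ?_⟩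
    refine (quotient_eq N hεpos hφ hF hNpos (up_isDisp hN _)
      (up_ne_zero hN (by simp)) A ?_).symm
    intro ℓ _
    have h2 : (bd ε (up N ((1:ℝ), (0:ℝ))) ℓ).2 = 0 := by
      apply hbd2
      intro j
      simp only [up]
      split_ifs <;> simp
    rw [h2]
    ring
  have memB : Bc ∈ S := by
    refine ⟨up N (0, 1), up_isDisp hN _, up_ne_zero hN (by simp), ?_⟩
    refine (quotient_eq N hεpos hφ hF hNpos (up_isDisp hN _)
      (up_ne_zero hN (by simp)) Bc ?_).symm
    intro ℓ _
    have h1 : (bd ε (up N ((0:ℝ), (1:ℝ))) ℓ).1 = 0 := by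
      apply hbd1
      intro j
      simp only [up]
      split_ifs <;> simp
    rw [h1]
    ring
  have hlb : ∀ r ∈ S, min A Bc ≤ r := by
    rintro r ⟨u, hu, hu0, rfl⟩
    rw [d2E_formula N hεpos hφ hF u, nrm_sq N hεpos.le (bd ε u)]
    have hS := sum_sq_pos hNpos hεpos.ne' hu hu0
    rw [le_div_iff₀ (by positivity)]
    have hterm : ∀ ℓ ∈ Finset.Icc (1 : ℤ) (N : ℤ),
        min A Bc * ((bd ε u ℓ).1 ^ 2 + (bd ε u ℓ).2 ^ 2) ≤
          A * (bd ε u ℓ).1 ^ 2 + Bc * (bd ε u ℓ).2 ^ 2 := by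
      intro ℓ _
      have := add_le_add
        (mul_le_mul_of_nonneg_right (min_le_left A Bc) (sq_nonneg (bd ε u ℓ).1))
        (mul_le_mul_of_nonneg_right (min_le_right A Bc) (sq_nonneg (bd ε u ℓ).2))
      linarith
    calc min A Bc * (ε * ∑ ℓ ∈ Finset.Icc (1 : ℤ) (N : ℤ),
          ((bd ε u ℓ).1 ^ 2 + (bd ε u ℓ).2 ^ 2))
        = ε * ∑ ℓ ∈ Finset.Icc (1 : ℤ) (N : ℤ),
            min A Bc * ((bd ε u ℓ).1 ^ 2 + (bd ε u ℓ).2 ^ 2) := by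
          rw [← Finset.mul_sum]; ring
      _ ≤ ε * ∑ ℓ ∈ Finset.Icc (1 : ℤ) (N : ℤ),
            (A * (bd ε u ℓ).1 ^ 2 + Bc * (bd ε u ℓ).2 ^ 2) := by
          apply mul_le_mul_of_nonneg_left (Finset.sum_le_sum hterm) hεpos.le
  have hmem : min A Bc ∈ S := by
    rcases le_total A Bc with h | h
    · rwa [min_eq_left h]
    · rwa [min_eq_right h]
  exact IsLeast.isGLB ⟨hmem, hlb⟩

end CBaux

theorem stmt_2 (N : ℕ) (hN : 4 ≤ N) (ε : ℝ) (hε : ε = (N : ℝ)⁻¹)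
    (φ : ℝ → ℝ) (hφ : ContDiffOn ℝ 2 φ (Set.Ioi 0)) (F : ℝ) (hF : 0 < F) :
    IsGLB {r : ℝ | ∃ u : ℤ → ℝ × ℝ, IsDisp N u ∧ u ≠ 0 ∧
        r = d2E (ECB N ε φ) (yLin ε F) u u / (nrm N ε (bd ε u)) ^ 2}
      (min (deriv (deriv φ) F + 4 * deriv (deriv φ) (2 * F))
        ((deriv φ F + 2 * deriv φ (2 * F)) / F)) := by
  exact CBaux.stmt_2' N hN ε hε φ hφ F hF
end
end

section
/- Let y_F be the linear chain with nearest-neighbor spacing Fε, and suppose φ'(2F) ≥ 0 and φ''(2F) ≤ 0. Then for every u ∈ 𝒰, δ²E^a(y_F)[u,u] ≥ min{ φ''(F) + 4 φ''(2F), φ'(F)/F } ‖u'‖²_{ℓ²_ε}. Moreover, if N is even and C > 0, the zig-zag displacement û ∈ 𝒰 given by û_ℓ = ((−1)^ℓ) (0, C) satisfies δ²E^a(y_F)[û,û] = (φ'(F)/F) ‖û'‖²_{ℓ²_ε}. -/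
noncomputable section

open Real Finset

/-! ### Auxiliary lemmas -/

section Aux

variable {φ : ℝ → ℝ}

lemma sxa_bond (hφ : ContDiffOn ℝ 2 φ (Set.Ioi 0)) (c : ℝ) (hc : 0 < c) (a : ℝ × ℝ) :
    ∃ h : ℝ → ℝ,
      (∀ᶠ τ in nhds (0:ℝ), HasDerivAt (fun t : ℝ => φ (enorm2 ((c, (0:ℝ)) + t • a))) (h τ) τ) ∧
      HasDerivAt h (deriv (deriv φ) c * a.1 ^ 2 + deriv φ c * a.2 ^ 2 / c) 0 := by
  have hder1 : ∀ x ∈ Set.Ioi (0:ℝ), HasDerivAt φ (deriv φ x) x := by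
    intro x hx
    have : DifferentiableAt ℝ φ x :=
      (hφ.differentiableOn (by norm_num)).differentiableAt (isOpen_Ioi.mem_nhds hx)
    exact this.hasDerivAt
  have hφ' : ContDiffOn ℝ 1 (deriv φ) (Set.Ioi 0) :=
    hφ.deriv_of_isOpen isOpen_Ioi (by norm_num)
  have hder2 : ∀ x ∈ Set.Ioi (0:ℝ), HasDerivAt (deriv φ) (deriv (deriv φ) x) x := by
    intro x hx
    have : DifferentiableAt ℝ (deriv φ) x :=
      (hφ'.differentiableOn (by norm_num)).differentiableAt (isOpen_Ioi.mem_nhds hx)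
    exact this.hasDerivAt
  set q : ℝ → ℝ := fun τ => (c + τ * a.1) ^ 2 + (τ * a.2) ^ 2 with hq
  set n : ℝ → ℝ := fun τ => Real.sqrt (q τ) with hn
  set qd : ℝ → ℝ := fun τ => 2 * (c + τ * a.1) * a.1 + 2 * τ * a.2 ^ 2 with hqd
  refine ⟨fun τ => deriv φ (n τ) * (qd τ / (2 * n τ)), ?_, ?_⟩
  · have hopen : IsOpen {τ : ℝ | 0 < q τ} := by
      have : Continuous q := by continuity
      exact isOpen_lt continuous_const this
    have h0 : (0:ℝ) ∈ {τ : ℝ | 0 < q τ} := by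
      simp [hq]; positivity
    filter_upwards [hopen.mem_nhds h0] with τ hτ
    have hqτ : 0 < q τ := hτ
    have hnτ : 0 < n τ := Real.sqrt_pos.2 hqτ
    have hq' : HasDerivAt q (qd τ) τ := by
      have h1 : HasDerivAt (fun t : ℝ => c + t * a.1) a.1 τ := by
        simpa using ((hasDerivAt_id τ).mul_const a.1).const_add c
      have h2 : HasDerivAt (fun t : ℝ => t * a.2) a.2 τ := by
        simpa using (hasDerivAt_id τ).mul_const a.2
      have := (h1.pow 2).add (h2.pow 2)
      exact this.congr_deriv (by simp only [hqd]; push_cast; ring)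
    have hn' : HasDerivAt n (qd τ / (2 * n τ)) τ := by
      have := (Real.hasDerivAt_sqrt (ne_of_gt hqτ)).comp τ hq'
      simp only [Function.comp_def] at this
      exact this.congr_deriv (by rw [hn]; simp only [div_eq_inv_mul, mul_comm, mul_assoc, mul_left_comm, mul_inv_rev, one_mul])
    have hcomp : HasDerivAt (fun t => φ (n t)) (deriv φ (n τ) * (qd τ / (2 * n τ))) τ :=
      (hder1 (n τ) hnτ).comp τ hn'
    have hEq : (fun t => φ (enorm2 ((c, (0:ℝ)) + t • a))) = fun t => φ (n t) := by
      funext t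
      congr 1
      simp [enorm2, hn, hq, Prod.fst_add, Prod.snd_add, Prod.smul_fst, Prod.smul_snd, smul_eq_mul]
    rw [hEq]
    exact hcomp
  · have hq0 : q 0 = c ^ 2 := by simp [hq]
    have hn0 : n 0 = c := by rw [hn]; simp only [hq0]; exact Real.sqrt_sq hc.le
    have hqd0 : qd 0 = 2 * c * a.1 := by simp [hqd]
    have hq'0 : HasDerivAt q (qd 0) 0 := by
      have h1 : HasDerivAt (fun t : ℝ => c + t * a.1) a.1 0 := by
        simpa using ((hasDerivAt_id (0:ℝ)).mul_const a.1).const_add c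
      have h2 : HasDerivAt (fun t : ℝ => t * a.2) a.2 0 := by
        simpa using (hasDerivAt_id (0:ℝ)).mul_const a.2
      have := (h1.pow 2).add (h2.pow 2)
      exact this.congr_deriv (by simp only [hqd]; push_cast; ring)
    have hn'0 : HasDerivAt n a.1 0 := by
      have h3 := (Real.hasDerivAt_sqrt (x := q 0) (by rw [hq0]; positivity)).comp 0 hq'0
      simp only [Function.comp_def] at h3
      exact h3.congr_deriv (by rw [hq0, Real.sqrt_sq hc.le, hqd0]; field_simp)
    have hqd' : HasDerivAt qd (2 * a.1 ^ 2 + 2 * a.2 ^ 2) 0 := by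
      have h1 : HasDerivAt (fun t : ℝ => 2 * (c + t * a.1) * a.1) (2 * a.1 ^ 2) 0 := by
        have : HasDerivAt (fun t : ℝ => c + t * a.1) a.1 0 := by
          simpa using ((hasDerivAt_id (0:ℝ)).mul_const a.1).const_add c
        have := (this.const_mul 2).mul_const a.1
        exact this.congr_deriv (by ring)
      have h2 : HasDerivAt (fun t : ℝ => 2 * t * a.2 ^ 2) (2 * a.2 ^ 2) 0 := by
        have := ((hasDerivAt_id (0:ℝ)).const_mul 2).mul_const (a.2 ^ 2)
        simpa using this
      exact (h1.add h2).congr_deriv rfl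
    have hden : HasDerivAt (fun τ => 2 * n τ) (2 * a.1) 0 := hn'0.const_mul 2
    have hquot : HasDerivAt (fun τ => qd τ / (2 * n τ)) (a.2 ^ 2 / c) 0 := by
      have hne : 2 * n 0 ≠ 0 := by rw [hn0]; positivity
      have := hqd'.div hden hne
      exact this.congr_deriv (by
        rw [hn0, hqd0]
        field_simp
        ring)
    have hcomp2 : HasDerivAt (fun τ => deriv φ (n τ)) (deriv (deriv φ) c * a.1) 0 := by
      have h4 : HasDerivAt (deriv φ) (deriv (deriv φ) (n 0)) (n 0) :=
        hder2 (n 0) (by rw [hn0]; exact hc)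
      have h5 := h4.comp 0 hn'0
      simp only [Function.comp_def, hn0] at h5
      exact h5
    have := hcomp2.mul hquot
    exact this.congr_deriv (by
      rw [hn0, hqd0, show 2 * c * a.1 / (2 * c) = a.1 by field_simp]
      ring)

lemma sxa_bd_lin (ε : ℝ) (hε : ε ≠ 0) (F : ℝ) (u : ℤ → ℝ × ℝ) (τ : ℝ) (ℓ : ℤ) :
    bd ε (fun m => yLin ε F m + τ • u m) ℓ = ((F, 0) : ℝ × ℝ) + τ • bd ε u ℓ := by
  simp only [bd, yLin]
  have h1 : ((F * ε * ℓ, (0:ℝ)) : ℝ × ℝ) + τ • u ℓ - ((F * ε * (ℓ-1), (0:ℝ)) + τ • u (ℓ-1))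
      = ((F * ε, 0) : ℝ × ℝ) + τ • (u ℓ - u (ℓ-1)) := by
    have : (F * ε * ℓ - F * ε * ((ℓ:ℝ) - 1)) = F * ε := by ring
    apply Prod.ext <;>
      simp [Prod.fst_add, Prod.snd_add, smul_sub, Prod.smul_fst, Prod.smul_snd] <;> ring
  push_cast [h1]
  rw [smul_add]
  congr 1
  · apply Prod.ext <;> simp [hε] <;> field_simp
  · rw [smul_comm]

lemma sxa_formula (N : ℕ) (ε : ℝ) (hε : 0 < ε) (hφ : ContDiffOn ℝ 2 φ (Set.Ioi 0))
    (F : ℝ) (hF : 0 < F) (u : ℤ → ℝ × ℝ) :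
    d2E (Ea N ε φ) (yLin ε F) u u =
      ε * ∑ ℓ ∈ Finset.Icc (1 : ℤ) (N : ℤ),
        ((deriv (deriv φ) F * (bd ε u ℓ).1 ^ 2 + deriv φ F * (bd ε u ℓ).2 ^ 2 / F)
        + (deriv (deriv φ) (2*F) * (bd ε u (ℓ+1) + bd ε u ℓ).1 ^ 2
           + deriv φ (2*F) * (bd ε u (ℓ+1) + bd ε u ℓ).2 ^ 2 / (2*F))) := by
  classical
  set a : ℤ → ℝ × ℝ := bd ε u with ha
  set b : ℤ → ℝ × ℝ := fun ℓ => a (ℓ+1) + a ℓ with hb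
  set A : ℝ → ℝ := fun τ => ε * ∑ ℓ ∈ Finset.Icc (1 : ℤ) (N : ℤ),
    (φ (enorm2 (((F:ℝ), (0:ℝ)) + τ • a ℓ)) + φ (enorm2 (((2*F:ℝ), (0:ℝ)) + τ • b ℓ))) with hA
  have hE : ∀ t s : ℝ, Ea N ε φ (fun ℓ => yLin ε F ℓ + t • u ℓ + s • u ℓ) = A (t + s) := by
    intro t s
    have h0 : (fun ℓ => yLin ε F ℓ + t • u ℓ + s • u ℓ)
        = fun ℓ => yLin ε F ℓ + (t+s) • u ℓ := by
      funext ℓ; rw [add_smul]; abel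
    rw [h0]
    simp only [Ea, hA]
    congr 1
    apply Finset.sum_congr rfl
    intro ℓ _
    rw [sxa_bd_lin ε hε.ne' F u (t+s), sxa_bd_lin ε hε.ne' F u (t+s)]
    congr 2
    simp only [hb, smul_add]
    have h2 : (((2*F:ℝ), (0:ℝ)) : ℝ × ℝ) = ((F,0) : ℝ × ℝ) + ((F,0) : ℝ × ℝ) := by
      apply Prod.ext <;> simp <;> ring
    rw [h2, ha]; abel
  have hbond1 := fun ℓ : ℤ => sxa_bond hφ F hF (a ℓ)
  have hbond2 := fun ℓ : ℤ => sxa_bond hφ (2*F) (by linarith) (b ℓ)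
  choose h1 h1ev h1d using hbond1
  choose h2 h2ev h2d using hbond2
  set H : ℝ → ℝ := fun τ => ε * ∑ ℓ ∈ Finset.Icc (1 : ℤ) (N : ℤ), (h1 ℓ τ + h2 ℓ τ) with hH
  have hAH : ∀ᶠ τ in nhds (0:ℝ), HasDerivAt A (H τ) τ := by
    have hev : ∀ᶠ τ in nhds (0:ℝ), ∀ ℓ ∈ Finset.Icc (1 : ℤ) (N : ℤ),
        HasDerivAt (fun t : ℝ => φ (enorm2 (((F:ℝ), (0:ℝ)) + t • a ℓ))) (h1 ℓ τ) τ ∧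
        HasDerivAt (fun t : ℝ => φ (enorm2 (((2*F:ℝ), (0:ℝ)) + t • b ℓ))) (h2 ℓ τ) τ := by
      rw [Filter.eventually_all_finset]
      intro ℓ _
      exact (h1ev ℓ).and (h2ev ℓ)
    filter_upwards [hev] with τ hτ
    have hsum : HasDerivAt
        (fun t : ℝ => ∑ ℓ ∈ Finset.Icc (1 : ℤ) (N : ℤ),
          (φ (enorm2 (((F:ℝ), (0:ℝ)) + t • a ℓ)) + φ (enorm2 (((2*F:ℝ), (0:ℝ)) + t • b ℓ))))
        (∑ ℓ ∈ Finset.Icc (1 : ℤ) (N : ℤ), (h1 ℓ τ + h2 ℓ τ)) τ :=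
      HasDerivAt.fun_sum fun ℓ hℓ => ((hτ ℓ hℓ).1.add (hτ ℓ hℓ).2)
    exact hsum.const_mul ε
  have hinner : ∀ᶠ s in nhds (0:ℝ),
      deriv (fun t : ℝ => Ea N ε φ (fun ℓ => yLin ε F ℓ + t • u ℓ + s • u ℓ)) 0 = H s := by
    filter_upwards [hAH] with s hs
    have h0 : (fun t : ℝ => Ea N ε φ (fun ℓ => yLin ε F ℓ + t • u ℓ + s • u ℓ))
        = fun t : ℝ => A (t + s) := funext fun t => hE t s
    rw [h0]
    have hs' : HasDerivAt A (H s) (0 + s) := by rwa [zero_add]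
    have hcomp := hs'.comp 0 ((hasDerivAt_id (0:ℝ)).add_const s)
    have hd := hcomp.deriv
    simp only [Function.comp_def, mul_one] at hd
    exact hd
  have hd2 : d2E (Ea N ε φ) (yLin ε F) u u = deriv H 0 := by
    simp only [d2E]
    exact Filter.EventuallyEq.deriv_eq hinner
  rw [hd2]
  have hHd : HasDerivAt H (ε * ∑ ℓ ∈ Finset.Icc (1 : ℤ) (N : ℤ),
      ((deriv (deriv φ) F * (a ℓ).1 ^ 2 + deriv φ F * (a ℓ).2 ^ 2 / F)
      + (deriv (deriv φ) (2*F) * (b ℓ).1 ^ 2 + deriv φ (2*F) * (b ℓ).2 ^ 2 / (2*F)))) 0 :=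
    (HasDerivAt.fun_sum fun ℓ _ => (h1d ℓ).add (h2d ℓ)).const_mul ε
  rw [hHd.deriv]

lemma sxa_sum_shift (N : ℕ) (hN : 1 ≤ N) (f : ℤ → ℝ) (hf : ∀ ℓ : ℤ, f (ℓ + N) = f ℓ) :
    ∑ ℓ ∈ Finset.Icc (1:ℤ) (N:ℤ), f (ℓ + 1) = ∑ ℓ ∈ Finset.Icc (1:ℤ) (N:ℤ), f ℓ := by
  have hNZ : (1:ℤ) ≤ (N:ℤ) := by exact_mod_cast hN
  have h1 : ∑ ℓ ∈ Finset.Icc (1:ℤ) (N:ℤ), f (ℓ + 1)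
      = ∑ ℓ ∈ Finset.Icc (2:ℤ) ((N:ℤ)+1), f ℓ := by
    rw [show Finset.Icc (2:ℤ) ((N:ℤ)+1) = (Finset.Icc (1:ℤ) (N:ℤ)).image (· + 1) by
      rw [Finset.image_add_right_Icc]; norm_num]
    rw [Finset.sum_image (by intro x _ y _ h; simp only at h; omega)]
  have e1 : Finset.Icc (1:ℤ) ((N:ℤ)+1) = insert ((N:ℤ)+1) (Finset.Icc (1:ℤ) (N:ℤ)) := by
    ext x; simp only [Finset.mem_Icc, Finset.mem_insert]; omega
  have e2 : Finset.Icc (1:ℤ) ((N:ℤ)+1) = insert (1:ℤ) (Finset.Icc (2:ℤ) ((N:ℤ)+1)) := by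
    ext x; simp only [Finset.mem_Icc, Finset.mem_insert]; omega
  have hni : ((N:ℤ)+1) ∉ Finset.Icc (1:ℤ) (N:ℤ) := by simp
  have h1i : (1:ℤ) ∉ Finset.Icc (2:ℤ) ((N:ℤ)+1) := by simp
  have fN : f ((N:ℤ)+1) = f 1 := by rw [add_comm]; exact hf 1
  have h2 := Finset.sum_insert (f := f) hni
  have h3 := Finset.sum_insert (f := f) h1i
  rw [← e1] at h2; rw [← e2] at h3
  rw [h1]; rw [h2, fN] at h3; linarith

lemma sxa_zig_sum (k : ℕ) : ∑ ℓ ∈ Finset.Icc (1:ℤ) (2*(k:ℤ)), ((-1:ℝ)^ℓ) = 0 := by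
  induction k with
  | zero => simp
  | succ k ih =>
    have e1 : Finset.Icc (1:ℤ) (2*((k:ℤ)+1)) =
        insert (2*(k:ℤ)+2) (insert (2*(k:ℤ)+1) (Finset.Icc (1:ℤ) (2*(k:ℤ)))) := by
      ext x; simp only [Finset.mem_Icc, Finset.mem_insert]; omega
    push_cast
    rw [e1, Finset.sum_insert (by simp only [Finset.mem_insert, Finset.mem_Icc]; omega),
      Finset.sum_insert (by simp only [Finset.mem_Icc]; omega)]
    push_cast at ih
    rw [ih]
    have hne : (-1:ℝ) ≠ 0 := by norm_num
    rw [show 2*(k:ℤ)+2 = (2*(k:ℤ)+1)+1 by ring, zpow_add_one₀ hne,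
      show 2*(k:ℤ)+1 = (2*(k:ℤ))+1 by ring, zpow_add_one₀ hne]
    ring

lemma sxa_sum_pair {s : Finset ℤ} (f g : ℤ → ℝ) :
    ∑ ℓ ∈ s, ((f ℓ, g ℓ) : ℝ × ℝ) = (∑ ℓ ∈ s, f ℓ, ∑ ℓ ∈ s, g ℓ) := by
  induction s using Finset.cons_induction with
  | empty => simp [Prod.ext_iff]
  | cons a s ha ih => simp [Finset.sum_insert ha, ih, Prod.ext_iff]

lemma sxa_zig_disp (N : ℕ) (hNe : Even N) (C : ℝ) :
    IsDisp N (fun ℓ : ℤ => ((0 : ℝ), (-1 : ℝ) ^ ℓ * C)) := by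
  constructor
  · intro ℓ
    have hN2 : Even ((N:ℤ)) := by exact_mod_cast hNe
    obtain ⟨m, hm⟩ := hN2
    have h : ((-1:ℝ))^(ℓ + (N:ℤ)) = (-1:ℝ)^ℓ := by
      rw [zpow_add₀ (by norm_num : (-1:ℝ) ≠ 0), hm,
        show ((-1:ℝ)^(m+m)) = 1 from Even.neg_one_zpow ⟨m, rfl⟩, mul_one]
    simp only [h]
  · obtain ⟨k, hk⟩ := hNe
    have hNk : ((N:ℤ)) = 2*(k:ℤ) := by omega
    rw [hNk]
    have hz := sxa_zig_sum k
    rw [sxa_sum_pair (fun _ => (0:ℝ)) (fun ℓ => (-1:ℝ)^ℓ * C)]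
    rw [← Finset.sum_mul, hz, zero_mul]
    simp

lemma sxa_nrm_sq (N : ℕ) (ε : ℝ) (hε : 0 < ε) (v : ℤ → ℝ × ℝ) :
    (nrm N ε v) ^ 2 = ε * ∑ ℓ ∈ Finset.Icc (1:ℤ) (N:ℤ), ((v ℓ).1 ^ 2 + (v ℓ).2 ^ 2) := by
  have h1 : ∀ ℓ : ℤ, (enorm2 (v ℓ))^2 = (v ℓ).1 ^ 2 + (v ℓ).2 ^ 2 := by
    intro ℓ; rw [enorm2, Real.sq_sqrt (by positivity)]
  rw [nrm, Real.sq_sqrt]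
  · congr 1; exact Finset.sum_congr rfl fun ℓ _ => h1 ℓ
  · apply mul_nonneg hε.le
    exact Finset.sum_nonneg fun ℓ _ => by positivity

end Aux

theorem stmt_3 (N : ℕ) (hN : 4 ≤ N) (ε : ℝ) (hε : ε = (N : ℝ)⁻¹)
    (φ : ℝ → ℝ) (hφ : ContDiffOn ℝ 2 φ (Set.Ioi 0)) (F : ℝ) (hF : 0 < F)
    (hφ1 : 0 ≤ deriv φ (2 * F)) (hφ2 : deriv (deriv φ) (2 * F) ≤ 0) :
    (∀ u : ℤ → ℝ × ℝ, IsDisp N u →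
      d2E (Ea N ε φ) (yLin ε F) u u ≥
        min (deriv (deriv φ) F + 4 * deriv (deriv φ) (2 * F)) (deriv φ F / F) *
          (nrm N ε (bd ε u)) ^ 2) ∧
    (Even N → ∀ C : ℝ, 0 < C →
      IsDisp N (fun ℓ : ℤ => ((0 : ℝ), (-1 : ℝ) ^ ℓ * C)) ∧
      d2E (Ea N ε φ) (yLin ε F)
          (fun ℓ : ℤ => ((0 : ℝ), (-1 : ℝ) ^ ℓ * C))
          (fun ℓ : ℤ => ((0 : ℝ), (-1 : ℝ) ^ ℓ * C)) =
        (deriv φ F / F) *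
          (nrm N ε (bd ε (fun ℓ : ℤ => ((0 : ℝ), (-1 : ℝ) ^ ℓ * C)))) ^ 2) := by
  have hNpos : (0:ℝ) < (N:ℝ) := by
    have : 0 < N := by omega
    exact_mod_cast this
  have hεpos : 0 < ε := by rw [hε]; positivity
  constructor
  · intro u hu
    rw [sxa_formula N ε hεpos hφ F hF u, sxa_nrm_sq N ε hεpos (bd ε u)]
    set a : ℤ → ℝ × ℝ := bd ε u with ha
    have hap : ∀ ℓ : ℤ, a (ℓ + (N:ℤ)) = a ℓ := by
      intro ℓ
      simp only [ha, bd]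
      rw [hu.1 ℓ, show ℓ + (N:ℤ) - 1 = (ℓ - 1) + (N:ℤ) by ring, hu.1 (ℓ-1)]
    set m := min (deriv (deriv φ) F + 4 * deriv (deriv φ) (2*F)) (deriv φ F / F) with hm
    set S1 := ∑ ℓ ∈ Finset.Icc (1:ℤ) (N:ℤ), (a ℓ).1 ^ 2 with hS1
    set S2 := ∑ ℓ ∈ Finset.Icc (1:ℤ) (N:ℤ), (a ℓ).2 ^ 2 with hS2
    have hS1n : 0 ≤ S1 := Finset.sum_nonneg fun ℓ _ => sq_nonneg _
    have hS2n : 0 ≤ S2 := Finset.sum_nonneg fun ℓ _ => sq_nonneg _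
    have hshift : ∑ ℓ ∈ Finset.Icc (1:ℤ) (N:ℤ), (a (ℓ+1)).1 ^ 2 = S1 :=
      sxa_sum_shift N (by omega) (fun ℓ => (a ℓ).1 ^ 2)
        (fun ℓ => by show (a (ℓ + (N:ℤ))).1 ^ 2 = (a ℓ).1 ^ 2; rw [hap])
    have hterm : ∀ ℓ ∈ Finset.Icc (1:ℤ) (N:ℤ),
        (deriv (deriv φ) F * (a ℓ).1 ^ 2 + deriv φ F * (a ℓ).2 ^ 2 / F
          + deriv (deriv φ) (2*F) * (2 * (a (ℓ+1)).1 ^ 2 + 2 * (a ℓ).1 ^ 2)) ≤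
        ((deriv (deriv φ) F * (a ℓ).1 ^ 2 + deriv φ F * (a ℓ).2 ^ 2 / F)
        + (deriv (deriv φ) (2*F) * (a (ℓ+1) + a ℓ).1 ^ 2
           + deriv φ (2*F) * (a (ℓ+1) + a ℓ).2 ^ 2 / (2*F))) := by
      intro ℓ _
      simp only [Prod.fst_add, Prod.snd_add]
      have h1 : 0 ≤ deriv φ (2*F) * ((a (ℓ+1)).2 + (a ℓ).2) ^ 2 / (2*F) :=
        div_nonneg (mul_nonneg hφ1 (sq_nonneg _)) (by linarith)
      nlinarith [mul_nonneg (neg_nonneg.2 hφ2) (sq_nonneg ((a (ℓ+1)).1 - (a ℓ).1))]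
    have hsum1 : ∑ ℓ ∈ Finset.Icc (1:ℤ) (N:ℤ),
        (deriv (deriv φ) F * (a ℓ).1 ^ 2 + deriv φ F * (a ℓ).2 ^ 2 / F
          + deriv (deriv φ) (2*F) * (2 * (a (ℓ+1)).1 ^ 2 + 2 * (a ℓ).1 ^ 2))
        = (deriv (deriv φ) F + 4 * deriv (deriv φ) (2*F)) * S1 + (deriv φ F / F) * S2 := by
      rw [Finset.sum_add_distrib, Finset.sum_add_distrib]
      have e1 : ∑ ℓ ∈ Finset.Icc (1:ℤ) (N:ℤ), deriv (deriv φ) F * (a ℓ).1 ^ 2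
          = deriv (deriv φ) F * S1 := by rw [hS1, Finset.mul_sum]
      have e2 : ∑ ℓ ∈ Finset.Icc (1:ℤ) (N:ℤ), deriv φ F * (a ℓ).2 ^ 2 / F
          = (deriv φ F / F) * S2 := by
        rw [hS2, Finset.mul_sum]
        exact Finset.sum_congr rfl fun ℓ _ => by ring
      have e3 : ∑ ℓ ∈ Finset.Icc (1:ℤ) (N:ℤ),
          deriv (deriv φ) (2*F) * (2 * (a (ℓ+1)).1 ^ 2 + 2 * (a ℓ).1 ^ 2)
          = 4 * deriv (deriv φ) (2*F) * S1 := by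
        rw [← Finset.mul_sum, Finset.sum_add_distrib, ← Finset.mul_sum, ← Finset.mul_sum,
          hshift, ← hS1]
        ring
      rw [e1, e2, e3]; ring
    have hm1 : m ≤ deriv (deriv φ) F + 4 * deriv (deriv φ) (2*F) := min_le_left _ _
    have hm2 : m ≤ deriv φ F / F := min_le_right _ _
    calc ε * ∑ ℓ ∈ Finset.Icc (1:ℤ) (N:ℤ),
          ((deriv (deriv φ) F * (a ℓ).1 ^ 2 + deriv φ F * (a ℓ).2 ^ 2 / F)
          + (deriv (deriv φ) (2*F) * (a (ℓ+1) + a ℓ).1 ^ 2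
             + deriv φ (2*F) * (a (ℓ+1) + a ℓ).2 ^ 2 / (2*F)))
        ≥ ε * ∑ ℓ ∈ Finset.Icc (1:ℤ) (N:ℤ),
          (deriv (deriv φ) F * (a ℓ).1 ^ 2 + deriv φ F * (a ℓ).2 ^ 2 / F
            + deriv (deriv φ) (2*F) * (2 * (a (ℓ+1)).1 ^ 2 + 2 * (a ℓ).1 ^ 2)) :=
          mul_le_mul_of_nonneg_left (Finset.sum_le_sum hterm) hεpos.le
      _ = ε * ((deriv (deriv φ) F + 4 * deriv (deriv φ) (2*F)) * S1 + (deriv φ F / F) * S2) := by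
          rw [hsum1]
      _ ≥ ε * (m * S1 + m * S2) := by
          apply mul_le_mul_of_nonneg_left _ hεpos.le
          nlinarith
      _ = m * (ε * (S1 + S2)) := by ring
      _ = m * (ε * ∑ ℓ ∈ Finset.Icc (1:ℤ) (N:ℤ), ((a ℓ).1 ^ 2 + (a ℓ).2 ^ 2)) := by
          rw [hS1, hS2, ← Finset.sum_add_distrib]
  · intro hNe C hC
    refine ⟨sxa_zig_disp N hNe C, ?_⟩
    set w : ℤ → ℝ × ℝ := fun ℓ : ℤ => ((0:ℝ), (-1:ℝ)^ℓ * C) with hw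
    have hne : (-1:ℝ) ≠ 0 := by norm_num
    have hbdz : ∀ ℓ : ℤ, bd ε w ℓ = ((0:ℝ), ε⁻¹ * (2 * (-1:ℝ)^ℓ * C)) := by
      intro ℓ
      have h : (-1:ℝ)^(ℓ-1) = -(-1:ℝ)^ℓ := by
        rw [zpow_sub_one₀ hne]
        norm_num
      simp only [hw, bd]
      apply Prod.ext
      · simp only [Prod.smul_fst, smul_eq_mul, Prod.fst_sub]
        norm_num
      · simp only [Prod.smul_snd, smul_eq_mul, Prod.snd_sub]
        rw [show ((ℓ:ℤ) - 1) = ℓ - 1 from rfl]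
        simp only [h]
        ring
    have hbz : ∀ ℓ : ℤ, bd ε w (ℓ+1) + bd ε w ℓ = ((0:ℝ), (0:ℝ)) := by
      intro ℓ
      rw [hbdz, hbdz]
      have h : (-1:ℝ)^(ℓ+1) = -(-1:ℝ)^ℓ := by rw [zpow_add_one₀ hne]; ring
      apply Prod.ext
      · simp
      · simp [Prod.snd_add, h]
    rw [sxa_formula N ε hεpos hφ F hF w, sxa_nrm_sq N ε hεpos (bd ε w)]
    have hcongr : ∀ ℓ ∈ Finset.Icc (1:ℤ) (N:ℤ),
        ((deriv (deriv φ) F * (bd ε w ℓ).1 ^ 2 + deriv φ F * (bd ε w ℓ).2 ^ 2 / F)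
        + (deriv (deriv φ) (2*F) * (bd ε w (ℓ+1) + bd ε w ℓ).1 ^ 2
           + deriv φ (2*F) * (bd ε w (ℓ+1) + bd ε w ℓ).2 ^ 2 / (2*F)))
        = (deriv φ F / F) * ((bd ε w ℓ).1 ^ 2 + (bd ε w ℓ).2 ^ 2) := by
      intro ℓ _
      rw [hbz ℓ, hbdz ℓ]
      norm_num
      ring
    rw [Finset.sum_congr rfl hcongr, ← Finset.mul_sum]
    ring

end
end
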